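/- arXiv:0907.3913 — 7 statements merged into one kernel-verified Lean document; each statement's English description precedes it below -/
import Mathlib

section
/- For all n × n complex matrices X and Y, ‖X*Y − Y*X‖₂² + ‖Xᴴ*Y + Y*Xᴴ‖₂² = Tr((Xᴴ*X + X*Xᴴ) * (Yᴴ*Y + Y*Yᴴ)), where Xᴴ denotes the conjugate transpose. -/
open Matrix BigOperators

/-- Frobenius norm of a complex matrix. -/
noncomputable def frobNorm {n : ℕ} (X : Matrix (Fin n) (Fin n) ℂ) : ℝ :=
  Real.sqrt (∑ i, ∑ j, ‖X i j‖ ^ 2)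

lemma frobNorm_sq_eq_trace {n : ℕ} (M : Matrix (Fin n) (Fin n) ℂ) :
    ((frobNorm M ^ 2 : ℝ) : ℂ) = (Mᴴ * M).trace := by
  have h : frobNorm M ^ 2 = ∑ i, ∑ j, ‖M i j‖ ^ 2 := by
    rw [frobNorm, Real.sq_sqrt]
    positivity
  rw [h]
  push_cast
  rw [Matrix.trace, Finset.sum_comm]
  simp only [Matrix.diag_apply, Matrix.mul_apply, Matrix.conjTranspose_apply]
  congr 1
  ext i
  congr 1
  ext j
  rw [Complex.star_def, mul_comm, Complex.mul_conj]
  norm_cast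
  exact Complex.sq_norm _

/-- For all `n × n` complex matrices `X` and `Y`,
`‖XY - YX‖₂² + ‖XᴴY + YXᴴ‖₂² = Tr((XᴴX + XXᴴ)(YᴴY + YYᴴ))`. -/
theorem frob_commutator_identity (n : ℕ) (X Y : Matrix (Fin n) (Fin n) ℂ) :
    ((frobNorm (X * Y - Y * X) ^ 2 + frobNorm (Xᴴ * Y + Y * Xᴴ) ^ 2 : ℝ) : ℂ)
      = ((Xᴴ * X + X * Xᴴ) * (Yᴴ * Y + Y * Yᴴ)).trace := by
  rw [Complex.ofReal_add, frobNorm_sq_eq_trace, frobNorm_sq_eq_trace]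
  simp only [Matrix.conjTranspose_sub, Matrix.conjTranspose_add, Matrix.conjTranspose_mul,
    Matrix.conjTranspose_conjTranspose, Matrix.sub_mul, Matrix.mul_sub, Matrix.add_mul,
    Matrix.mul_add, Matrix.trace_sub, Matrix.trace_add]
  have c1 := Matrix.trace_mul_cycle (Yᴴ * Xᴴ) X Y
  have c2 := Matrix.trace_mul_cycle (Xᴴ * Yᴴ) Y X
  have c3 := Matrix.trace_mul_cycle (Yᴴ * X) Xᴴ Y
  have c4 := Matrix.trace_mul_cycle (X * Yᴴ) Y Xᴴ
  have c5 := Matrix.trace_mul_cycle (Yᴴ * Xᴴ) Y X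
  have c6 := Matrix.trace_mul_cycle (X * Yᴴ) Xᴴ Y
  have c7 := Matrix.trace_mul_cycle Xᴴ Yᴴ (X * Y)
  have c8 := Matrix.trace_mul_cycle (Yᴴ * X) Y Xᴴ
  have c9 := Matrix.trace_mul_comm (Y * Yᴴ) (Xᴴ * X)
  have c10 := Matrix.trace_mul_comm (Y * Yᴴ) (X * Xᴴ)
  simp only [mul_assoc] at *
  linear_combination c1 + c9 + c3 + c10 + c4 + c2 + c8 - c5
end

section
/- Let X and Y be n × n complex matrices with X ≠ 0, and set ρ = (Xᴴ*X + X*Xᴴ) / (2‖X‖₂²). Then ‖X*Y − Y*X‖₂² ≤ 4‖X‖₂² * ( Tr(ρ*(Yᴴ*Y + Y*Yᴴ))/2 − |Tr(ρ*Y)|² ). -/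
open Matrix BigOperators

namespace FrobAux
variable {n : ℕ}

noncomputable def toEuc (A : Matrix (Fin n) (Fin n) ℂ) : EuclideanSpace ℂ (Fin n × Fin n) :=
  WithLp.toLp 2 (fun p : Fin n × Fin n => A p.1 p.2)

lemma toEuc_norm (A : Matrix (Fin n) (Fin n) ℂ) : ‖toEuc A‖ = frobNorm A := by
  rw [EuclideanSpace.norm_eq, frobNorm, Fintype.sum_prod_type]
  simp [toEuc]

lemma toEuc_inner (A B : Matrix (Fin n) (Fin n) ℂ) :
    (inner ℂ (toEuc A) (toEuc B) : ℂ) = (Aᴴ * B).trace := by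
  simp only [PiLp.inner_apply, RCLike.inner_apply, toEuc, Matrix.trace, Matrix.diag,
    Matrix.mul_apply, conjTranspose_apply, PiLp.toLp_apply]
  rw [Fintype.sum_prod_type]
  rw [Finset.sum_comm]; simp only [mul_comm]; rfl

lemma rot3 (A B C : Matrix (Fin n) (Fin n) ℂ) :
    (A * (B * C)).trace = (B * (C * A)).trace := by
  rw [trace_mul_comm]; simp only [Matrix.mul_assoc]

lemma rot4 (A B C D : Matrix (Fin n) (Fin n) ℂ) :
    (A * (B * (C * D))).trace = (B * (C * (D * A))).trace := by
  rw [trace_mul_comm]; simp only [Matrix.mul_assoc]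

lemma key (X Y : Matrix (Fin n) (Fin n) ℂ) :
    ((X*Y - Y*X)ᴴ * (X*Y - Y*X)).trace + ((X*Yᴴ + Yᴴ*X)ᴴ * (X*Yᴴ + Yᴴ*X)).trace
      = ((Xᴴ*X + X*Xᴴ) * (Yᴴ*Y + Y*Yᴴ)).trace := by
  simp only [conjTranspose_sub, conjTranspose_add, conjTranspose_mul,
    conjTranspose_conjTranspose, sub_mul, mul_sub, add_mul, mul_add, trace_sub, trace_add,
    Matrix.mul_assoc]
  simp only [rot4 Yᴴ Xᴴ X Y, rot4 Yᴴ Xᴴ Y X, rot4 Y Xᴴ X Yᴴ, rot4 Y Xᴴ Yᴴ X,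
    rot4 X Xᴴ Yᴴ Y, rot4 X Xᴴ Y Yᴴ]
  ring

lemma key2 (X Y : Matrix (Fin n) (Fin n) ℂ) :
    ((X*Yᴴ + Yᴴ*X)ᴴ * X).trace = ((Xᴴ*X + X*Xᴴ) * Y).trace := by
  simp only [conjTranspose_add, conjTranspose_mul, conjTranspose_conjTranspose,
    add_mul, trace_add, Matrix.mul_assoc]
  simp only [rot3 Y Xᴴ X, rot3 Xᴴ Y X, rot3 Y X Xᴴ]

end FrobAux

/-- With `ρ = (XᴴX + XXᴴ)/(2‖X‖₂²)`, one has
`‖XY - YX‖₂² ≤ 4‖X‖₂² (Tr(ρ(YᴴY + YYᴴ))/2 - |Tr(ρY)|²)`. -/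
theorem frob_commutator_variance_bound (n : ℕ) (X Y : Matrix (Fin n) (Fin n) ℂ)
    (hX : X ≠ 0)
    (ρ : Matrix (Fin n) (Fin n) ℂ)
    (hρ : ρ = ((2 * frobNorm X ^ 2 : ℝ) : ℂ)⁻¹ • (Xᴴ * X + X * Xᴴ)) :
    frobNorm (X * Y - Y * X) ^ 2
      ≤ 4 * frobNorm X ^ 2 *
        ((ρ * (Yᴴ * Y + Y * Yᴴ)).trace.re / 2 - ‖(ρ * Y).trace‖ ^ 2) := by
  have hu : frobNorm X = ‖FrobAux.toEuc X‖ := (FrobAux.toEuc_norm X).symm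
  have hv : frobNorm (X * Y - Y * X) = ‖FrobAux.toEuc (X * Y - Y * X)‖ :=
    (FrobAux.toEuc_norm _).symm
  have hXne : FrobAux.toEuc X ≠ 0 := by
    intro h
    apply hX
    ext i j
    have := congrFun (congrArg WithLp.ofLp h) (i, j)
    simpa [FrobAux.toEuc] using this
  have hN : 0 < frobNorm X ^ 2 := by
    rw [hu]; exact pow_pos (norm_pos_iff.mpr hXne) 2
  set r : ℝ := frobNorm X ^ 2 with hr
  set S : Matrix (Fin n) (Fin n) ℂ := Xᴴ * X + X * Xᴴ with hS
  set a : ℝ := ‖(S * Y).trace‖ with ha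
  set b : ℝ := ‖FrobAux.toEuc (X * Y - Y * X)‖ with hb
  set c : ℝ := ‖FrobAux.toEuc (X * Yᴴ + Yᴴ * X)‖ with hc
  have hT : (S * (Yᴴ * Y + Y * Yᴴ)).trace = ((b ^ 2 + c ^ 2 : ℝ) : ℂ) := by
    rw [← FrobAux.key, ← FrobAux.toEuc_inner, ← FrobAux.toEuc_inner,
      inner_self_eq_norm_sq_to_K, inner_self_eq_norm_sq_to_K]
    push_cast
    norm_cast
  have hA : a ≤ c * ‖FrobAux.toEuc X‖ := by
    rw [ha, ← FrobAux.key2, ← FrobAux.toEuc_inner]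
    exact norm_inner_le_norm _ _
  have ha0 : 0 ≤ a := norm_nonneg _
  have hineq : a ^ 2 ≤ c ^ 2 * r := by
    have hc0 : 0 ≤ c := norm_nonneg _
    have hu0 : 0 ≤ ‖FrobAux.toEuc X‖ := norm_nonneg _
    have : r = ‖FrobAux.toEuc X‖ ^ 2 := by rw [hr, hu]
    nlinarith [hA, ha0, hc0, hu0]
  have hρT : (ρ * (Yᴴ * Y + Y * Yᴴ)).trace = ((2 * r : ℝ) : ℂ)⁻¹ * ((b ^ 2 + c ^ 2 : ℝ) : ℂ) := by
    rw [hρ, Matrix.smul_mul, trace_smul, smul_eq_mul, hT]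
  have hρY : ‖(ρ * Y).trace‖ = (2 * r)⁻¹ * a := by
    rw [hρ, Matrix.smul_mul, trace_smul, smul_eq_mul, norm_mul, norm_inv,
      Complex.norm_real, Real.norm_eq_abs, abs_of_pos (by linarith), ← ha]
  rw [hv, hρT, hρY]
  have hre : (((2 * r : ℝ) : ℂ)⁻¹ * ((b ^ 2 + c ^ 2 : ℝ) : ℂ)).re
      = (2 * r)⁻¹ * (b ^ 2 + c ^ 2) := by
    rw [← Complex.ofReal_inv, ← Complex.ofReal_mul, Complex.ofReal_re]
  rw [hre]
  have h2r : (0 : ℝ) < 2 * r := by linarith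
  have hrhs : 4 * r * ((2 * r)⁻¹ * (b ^ 2 + c ^ 2) / 2 - ((2 * r)⁻¹ * a) ^ 2)
      = b ^ 2 + c ^ 2 - a ^ 2 / r := by
    field_simp
    ring
  rw [hrhs]
  have hdiv : a ^ 2 / r ≤ c ^ 2 := (div_le_iff₀ hN).mpr hineq
  linarith
end

section
/- Let A be a Hermitian n × n complex matrix and let ρ be a density matrix of the same size. Then Tr(ρ*A²) − (Tr(ρ*A))² ≤ ‖A‖₂²/2, where Tr(ρ*A) and Tr(ρ*A²) are real. -/
open Matrix BigOperators
open scoped ComplexOrder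

lemma var_le_aux (n : ℕ) (p lam : Fin n → ℝ) (hp0 : ∀ i, 0 ≤ p i)
    (hps : ∑ i, p i = 1) :
    ∑ i, p i * lam i ^ 2 - (∑ i, p i * lam i) ^ 2 ≤ (∑ i, lam i ^ 2) / 2 := by
  set S1 := ∑ i, p i * lam i with hS1
  set S2 := ∑ i, p i * lam i ^ 2 with hS2
  have hT : ∑ i, ∑ j, p i * p j * (lam i - lam j) ^ 2 = 2 * S2 - 2 * S1 ^ 2 := by
    have h1 : ∀ i, ∑ j, p i * p j * (lam i - lam j) ^ 2
        = p i * lam i ^ 2 * (∑ j, p j) - 2 * (p i * lam i) * S1 + p i * S2 := by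
      intro i
      rw [show (∑ j, p i * p j * (lam i - lam j) ^ 2)
          = ∑ j, (p i * lam i ^ 2 * p j - 2 * (p i * lam i) * (p j * lam j)
              + p i * (p j * lam j ^ 2)) from Finset.sum_congr rfl fun j _ => by ring,
        Finset.sum_add_distrib, Finset.sum_sub_distrib, ← Finset.mul_sum, ← Finset.mul_sum,
        ← Finset.mul_sum, hS1, hS2]
    rw [Finset.sum_congr rfl fun i _ => h1 i, Finset.sum_add_distrib,
      Finset.sum_sub_distrib, hps]
    simp only [mul_one]
    rw [← hS2, ← Finset.sum_mul, ← Finset.sum_mul]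
    rw [show (∑ i, 2 * (p i * lam i)) = 2 * S1 by rw [hS1, Finset.mul_sum],
      hps]
    ring
  have hbound : ∑ i, ∑ j, p i * p j * (lam i - lam j) ^ 2
      ≤ ∑ i, (2 * p i * lam i ^ 2 + 2 * p i * S2 - 4 * p i ^ 2 * lam i ^ 2) := by
    apply Finset.sum_le_sum
    intro i _
    have key : ∑ j, p i * p j * (lam i - lam j) ^ 2
        = ∑ j ∈ Finset.univ.erase i, p i * p j * (lam i - lam j) ^ 2 := by
      rw [Finset.sum_erase _ (by ring)]
    rw [key]
    have h2 : ∑ j ∈ Finset.univ.erase i, p i * p j * (lam i - lam j) ^ 2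
        ≤ ∑ j ∈ Finset.univ.erase i, 2 * (p i * p j) * (lam i ^ 2 + lam j ^ 2) := by
      apply Finset.sum_le_sum
      intro j _
      have h3 : (lam i - lam j) ^ 2 ≤ 2 * (lam i ^ 2 + lam j ^ 2) := by
        nlinarith [sq_nonneg (lam i + lam j)]
      have h4 : 0 ≤ p i * p j := mul_nonneg (hp0 i) (hp0 j)
      nlinarith
    refine h2.trans (le_of_eq ?_)
    rw [Finset.sum_erase_eq_sub (Finset.mem_univ i)]
    have h5 : ∑ j, 2 * (p i * p j) * (lam i ^ 2 + lam j ^ 2)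
        = 2 * p i * lam i ^ 2 * (∑ j, p j) + 2 * p i * S2 := by
      rw [show (∑ j, 2 * (p i * p j) * (lam i ^ 2 + lam j ^ 2))
          = ∑ j, (2 * p i * lam i ^ 2 * p j + 2 * p i * (p j * lam j ^ 2)) from
          Finset.sum_congr rfl fun j _ => by ring,
        Finset.sum_add_distrib, ← Finset.mul_sum, ← Finset.mul_sum, hS2]
    rw [h5, hps]
    ring
  have hfinal : ∑ i, (2 * p i * lam i ^ 2 + 2 * p i * S2 - 4 * p i ^ 2 * lam i ^ 2)
      ≤ 2 * S2 + 2 * S2 - ∑ i, (4 * p i ^ 2 * lam i ^ 2) := by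
    rw [Finset.sum_sub_distrib, Finset.sum_add_distrib]
    have : ∑ i, 2 * p i * lam i ^ 2 = 2 * S2 := by
      rw [hS2, Finset.mul_sum]; exact Finset.sum_congr rfl fun i _ => by ring
    have h6 : ∑ i, 2 * p i * S2 = 2 * S2 := by
      rw [← Finset.sum_mul, show (∑ i, 2 * p i) = 2 * (∑ i, p i) by rw [Finset.mul_sum],
        hps]
      ring
    rw [this, h6]
  have hpt : ∑ i, (4 * p i * lam i ^ 2 - 4 * p i ^ 2 * lam i ^ 2) ≤ ∑ i, lam i ^ 2 := by
    apply Finset.sum_le_sum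
    intro i _
    nlinarith [sq_nonneg (p i - 1/2), sq_nonneg (lam i)]
  have := hT ▸ hbound
  have h4S : ∑ i, 4 * p i * lam i ^ 2 = 4 * S2 := by
    rw [hS2, Finset.mul_sum]; exact Finset.sum_congr rfl fun i _ => by ring
  rw [Finset.sum_sub_distrib, h4S] at hpt
  linarith

/-- For a Hermitian matrix `A` and a density matrix `ρ`, the traces `Tr(ρA)` and
`Tr(ρA²)` are real and `Tr(ρA²) - (Tr(ρA))² ≤ ‖A‖₂²/2`. -/
theorem variance_bound_hermitian (n : ℕ) (A ρ : Matrix (Fin n) (Fin n) ℂ)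
    (hA : A.IsHermitian) (hρ : ρ.PosSemidef) (hρtr : ρ.trace = 1) :
    (ρ * A).trace.im = 0 ∧ (ρ * (A * A)).trace.im = 0 ∧
      (ρ * (A * A)).trace.re - ((ρ * A).trace.re) ^ 2 ≤ frobNorm A ^ 2 / 2 := by
  set U : Matrix (Fin n) (Fin n) ℂ := (hA.eigenvectorUnitary : Matrix (Fin n) (Fin n) ℂ)
    with hU
  set lam : Fin n → ℝ := hA.eigenvalues with hlam
  have hspec : A = U * diagonal (Complex.ofReal ∘ lam) * Uᴴ := by
    simpa [Matrix.star_eq_conjTranspose] using hA.spectral_theorem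
  have hUU : Uᴴ * U = 1 := by
    simpa [Matrix.star_eq_conjTranspose] using Unitary.coe_star_mul_self hA.eigenvectorUnitary
  have hUU' : U * Uᴴ = 1 := by
    simpa [Matrix.star_eq_conjTranspose] using Unitary.coe_mul_star_self hA.eigenvectorUnitary
  set σ : Matrix (Fin n) (Fin n) ℂ := Uᴴ * ρ * U with hσ
  have hσpsd : σ.PosSemidef := hρ.conjTranspose_mul_mul_same U
  have hσtr : σ.trace = 1 := by
    rw [hσ, Matrix.trace_mul_comm, ← Matrix.mul_assoc, hUU', Matrix.one_mul, hρtr]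
  have hdiag : ∀ i, 0 ≤ σ i i := fun i => by
    exact hσpsd.diag_nonneg
  have hdiag' : ∀ i, σ i i = Complex.ofReal ((σ i i).re) := by
    intro i
    have := (Complex.nonneg_iff.mp (hdiag i)).2
    exact Complex.ext rfl (by simp [← this])
  set p : Fin n → ℝ := fun i => (σ i i).re with hp
  have hp0 : ∀ i, 0 ≤ p i := fun i => (Complex.nonneg_iff.mp (hdiag i)).1
  have hps : ∑ i, p i = 1 := by
    have : (Complex.ofReal (∑ i, p i)) = 1 := by
      push_cast
      rw [← hσtr]
      exact (Finset.sum_congr rfl fun i _ => (hdiag' i).symm).trans rfl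
    exact_mod_cast this
  -- generic trace computation
  have key : ∀ d : Fin n → ℝ,
      (ρ * (U * diagonal (fun i => (d i : ℂ)) * Uᴴ)).trace
        = Complex.ofReal (∑ i, p i * d i) := by
    intro d
    rw [← Matrix.mul_assoc, ← Matrix.mul_assoc, Matrix.trace_mul_comm,
      ← Matrix.mul_assoc, ← Matrix.mul_assoc, ← hσ]
    push_cast
    rw [Matrix.trace]
    refine Finset.sum_congr rfl fun i _ => ?_
    rw [Matrix.diag_apply, Matrix.mul_diagonal, hdiag' i]
  have htr1 : (ρ * A).trace = Complex.ofReal (∑ i, p i * lam i) := by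
    rw [hspec]
    exact key lam
  have hAA : A * A = U * diagonal (fun i => ((lam i ^ 2 : ℝ) : ℂ)) * Uᴴ := by
    rw [hspec]
    have : (U * diagonal (Complex.ofReal ∘ lam) * Uᴴ) * (U * diagonal (Complex.ofReal ∘ lam) * Uᴴ)
        = U * (diagonal (Complex.ofReal ∘ lam) * (Uᴴ * U) * diagonal (Complex.ofReal ∘ lam)) * Uᴴ := by
      simp only [Matrix.mul_assoc]
    rw [this, hUU, Matrix.mul_one, Matrix.diagonal_mul_diagonal]
    have hfun : (fun i => (Complex.ofReal ∘ lam) i * (Complex.ofReal ∘ lam) i)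
        = fun i => ((lam i ^ 2 : ℝ) : ℂ) := by
      funext i
      simp only [Function.comp_apply]
      push_cast
      ring
    rw [hfun]
  have htr2 : (ρ * (A * A)).trace = Complex.ofReal (∑ i, p i * lam i ^ 2) := by
    rw [hAA, key (fun i => lam i ^ 2)]
  have hfrob : frobNorm A ^ 2 = ∑ i, lam i ^ 2 := by
    have hnn : 0 ≤ ∑ i, ∑ j, ‖A i j‖ ^ 2 :=
      Finset.sum_nonneg fun i _ => Finset.sum_nonneg fun j _ => sq_nonneg _
    rw [frobNorm, Real.sq_sqrt hnn]
    have htrAA : (A * A).trace = Complex.ofReal (∑ i, lam i ^ 2) := by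
      rw [hAA, Matrix.trace_mul_cycle, hUU, Matrix.one_mul, Matrix.trace_diagonal]
      push_cast
      rfl
    have habs : Complex.ofReal (∑ i, ∑ j, ‖A i j‖ ^ 2) = (A * A).trace := by
      rw [Matrix.trace]
      push_cast
      refine Finset.sum_congr rfl fun i _ => ?_
      rw [Matrix.diag_apply, Matrix.mul_apply]
      refine Finset.sum_congr rfl fun j _ => ?_
      have hji : A j i = (starRingEnd ℂ) (A i j) := by
        conv_rhs => rw [← hA.apply i j]
        simp
      rw [hji, Complex.mul_conj, ← Complex.sq_norm]
      push_cast
      ring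
    have := habs.trans htrAA
    exact_mod_cast this
  have hineq := var_le_aux n p lam hp0 hps
  refine ⟨by rw [htr1]; exact Complex.ofReal_im _, by rw [htr2]; exact Complex.ofReal_im _, ?_⟩
  rw [htr1, htr2, hfrob, Complex.ofReal_re, Complex.ofReal_re]
  exact hineq
end

section
/- Let d ≥ 1 and x : Fin d → ℂ. Then the maximum over all probability vectors p : Fin d → ℝ of the variance ∑ i, p i * |x i − ∑ j, p j * x j|² is attained and equals min over y ∈ ℂ of (max over i of |x i − y|)²; that is, the largest possible variance of a complex random variable with values x i equals the square of the radius of the smallest circle circumscribing the points x i. -/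
open BigOperators Finset

lemma sum_sq_shift {d : ℕ} (q a : Fin d → ℝ) (h1 : ∑ i, q i = 1) (t : ℝ) :
    ∑ i, q i * (a i - t) ^ 2
      = ∑ i, q i * (a i - ∑ j, q j * a j) ^ 2 + (∑ j, q j * a j - t) ^ 2 := by
  set m := ∑ j, q j * a j with hm
  have expand : ∀ s : ℝ, ∑ i, q i * (a i - s) ^ 2
      = ∑ i, q i * a i ^ 2 - 2 * s * m + s ^ 2 := by
    intro s
    have h : ∀ i ∈ univ, q i * (a i - s) ^ 2
        = q i * a i ^ 2 - 2 * s * (q i * a i) + s ^ 2 * q i := fun i _ => by ring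
    rw [Finset.sum_congr rfl h, Finset.sum_add_distrib, Finset.sum_sub_distrib,
      ← Finset.mul_sum, ← Finset.mul_sum, h1, ← hm]
    ring
  rw [expand t, expand m]
  ring
lemma var_ident {d : ℕ} (x : Fin d → ℂ) (q : Fin d → ℝ) (h1 : ∑ i, q i = 1) (y : ℂ) :
    ∑ i, q i * ‖x i - y‖ ^ 2
      = ∑ i, q i * ‖x i - ∑ j, (q j : ℂ) * x j‖ ^ 2
        + ‖(∑ j, (q j : ℂ) * x j) - y‖ ^ 2 := by
  set μ : ℂ := ∑ j, (q j : ℂ) * x j with hμ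
  have hre : μ.re = ∑ j, q j * (x j).re := by
    simp [hμ, Complex.re_sum, Complex.mul_re]
  have him : μ.im = ∑ j, q j * (x j).im := by
    simp [hμ, Complex.im_sum, Complex.mul_im]
  have key : ∀ w : ℂ, ∑ i, q i * ‖x i - w‖ ^ 2
      = ∑ i, q i * ((x i).re - w.re) ^ 2 + ∑ i, q i * ((x i).im - w.im) ^ 2 := by
    intro w
    rw [← Finset.sum_add_distrib]
    refine Finset.sum_congr rfl fun i _ => ?_
    rw [Complex.sq_norm, Complex.normSq_apply, Complex.sub_re, Complex.sub_im]
    ring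
  have h2 : ∑ i, q i * ((x i).re - y.re) ^ 2
      = ∑ i, q i * ((x i).re - ∑ j, q j * (x j).re) ^ 2
        + ((∑ j, q j * (x j).re) - y.re) ^ 2 := sum_sq_shift q (fun i => (x i).re) h1 y.re
  have h3 : ∑ i, q i * ((x i).im - y.im) ^ 2
      = ∑ i, q i * ((x i).im - ∑ j, q j * (x j).im) ^ 2
        + ((∑ j, q j * (x j).im) - y.im) ^ 2 := sum_sq_shift q (fun i => (x i).im) h1 y.im
  rw [key y, key μ, h2, h3, Complex.sq_norm, Complex.normSq_apply, Complex.sub_re,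
    Complex.sub_im, hre, him]
  ring

lemma center_in_hull {d : ℕ} [inst : Nonempty (Fin d)] (x : Fin d → ℂ) (c : ℂ)
    (hmin : ∀ y : ℂ, univ.sup' univ_nonempty (fun i => ‖x i - c‖)
      ≤ univ.sup' univ_nonempty (fun i => ‖x i - y‖)) :
    ∃ p : Fin d → ℝ, (∀ i, 0 ≤ p i) ∧ (∑ i, p i = 1) ∧ (∑ i, p i • x i = c) ∧
      (∀ i, p i ≠ 0 → ‖x i - c‖
        = univ.sup' univ_nonempty (fun i => ‖x i - c‖)) := by
  set r : ℝ := univ.sup' univ_nonempty (fun i => ‖x i - c‖) with hr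
  obtain ⟨i1, _, hi1⟩ := Finset.exists_mem_eq_sup' (univ_nonempty)
    (fun i => ‖x i - c‖)
  have hr0 : 0 ≤ r := by rw [hr, hi1]; exact norm_nonneg _
  set S : Finset (Fin d) := univ.filter (fun i => ‖x i - c‖ = r) with hS
  have hi1S : i1 ∈ S := by simp [hS, hi1.symm]; exact hr.symm
  set A : Set (Fin d → ℝ) :=
    stdSimplex ℝ (Fin d) ∩ {w | ∀ i, i ∉ S → w i = 0} with hA
  have hclosed2 : IsClosed {w : Fin d → ℝ | ∀ i, i ∉ S → w i = 0} := by
    have heq : {w : Fin d → ℝ | ∀ i, i ∉ S → w i = 0}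
        = ⋂ i, ⋂ (_ : i ∉ S), {w : Fin d → ℝ | w i = 0} := by ext w; simp
    rw [heq]
    exact isClosed_iInter fun i => isClosed_iInter fun _ =>
      isClosed_eq (continuous_apply i) continuous_const
  have hAcompact : IsCompact A := (isCompact_stdSimplex ℝ _).inter_right hclosed2
  have hmap : Continuous (fun w : Fin d → ℝ => ∑ i, w i • x i) :=
    continuous_finset_sum _ fun i _ => (continuous_apply i).smul continuous_const
  have hlin : IsLinearMap ℝ (fun w : Fin d → ℝ => ∑ i, w i • x i) := by
    constructor
    · intro w1 w2; simp [add_smul, Finset.sum_add_distrib]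
    · intro a w; simp [smul_smul, Finset.smul_sum, mul_assoc]
  set M : Set ℂ := (fun w : Fin d → ℝ => ∑ i, w i • x i) '' A with hM
  have hMcompact : IsCompact M := hAcompact.image hmap
  have hAconvex : Convex ℝ A := by
    refine (convex_stdSimplex ℝ _).inter ?_
    intro w1 h1 w2 h2 a b _ _ _
    intro i hi
    simp [h1 i hi, h2 i hi]
  have hMconvex : Convex ℝ M := hAconvex.is_linear_image hlin
  have hxM : ∀ i ∈ S, x i ∈ M := by
    intro i hi
    refine ⟨fun j => if j = i then 1 else 0, ⟨⟨fun j => by positivity, by simp⟩, ?_⟩, ?_⟩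
    · intro j hj
      simp only [ite_eq_right_iff]
      intro hji; exact absurd (hji ▸ hi) hj
    · simp [ite_smul]
  by_cases hcM : c ∈ M
  · obtain ⟨w, ⟨⟨hw0, hw1⟩, hwsupp⟩, hwc⟩ := hcM
    refine ⟨w, hw0, hw1, hwc, ?_⟩
    intro i hi
    by_contra habs
    exact hi (hwsupp i (by simp [hS, habs]))
  · exfalso
    obtain ⟨f, u, hfu, hufc⟩ := geometric_hahn_banach_closed_point hMconvex
      hMcompact.isClosed hcM
    have hfx : ∀ i ∈ S, f (x i) < f c := fun i hi => (hfu _ (hxM i hi)).trans hufc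
    have hfz : ∀ z : ℂ, f z = z.re * f 1 + z.im * f Complex.I := by
      intro z
      conv_lhs => rw [show z = z.re • (1 : ℂ) + z.im • Complex.I by
        apply Complex.ext <;> simp]
      rw [map_add, map_smul, map_smul, smul_eq_mul, smul_eq_mul]
    set N : ℝ := f 1 ^ 2 + f Complex.I ^ 2 with hNdef
    set v : ℂ := (f 1 : ℂ) + (f Complex.I : ℂ) * Complex.I with hv
    have hvre : v.re = f 1 := by simp [hv]
    have hvim : v.im = f Complex.I := by simp [hv]
    have hN : 0 < N := by
      have hN0 : 0 ≤ N := by positivity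
      rcases hN0.lt_or_eq with h | h
      · exact h
      · exfalso
        have h1 : f 1 = 0 := by nlinarith [sq_nonneg (f 1), sq_nonneg (f Complex.I)]
        have h2 : f Complex.I = 0 := by nlinarith [sq_nonneg (f 1), sq_nonneg (f Complex.I)]
        have hz : ∀ z, f z = 0 := fun z => by rw [hfz z, h1, h2]; ring
        have := hfx i1 hi1S
        rw [hz, hz] at this
        exact lt_irrefl 0 this
    have hexp : ∀ (i : Fin d) (t : ℝ), ‖x i - (c - t • v)‖ ^ 2
        = ‖x i - c‖ ^ 2 + 2 * t * (f (x i) - f c) + t ^ 2 * N := by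
      intro i t
      rw [Complex.sq_norm, Complex.sq_norm, Complex.normSq_apply, Complex.normSq_apply,
        hfz (x i), hfz c, hNdef]
      simp only [Complex.sub_re, Complex.sub_im, Complex.real_smul, Complex.mul_re,
        Complex.mul_im, Complex.ofReal_re, Complex.ofReal_im, hvre, hvim]
      ring
    -- choose step size
    set τ : Fin d → ℝ := fun i => if i ∈ S then (f c - f (x i)) / N
      else min 1 ((r ^ 2 - ‖x i - c‖ ^ 2)
        / (2 * |f (x i) - f c| + N + 1)) with hτ
    have hρlt : ∀ i, i ∉ S → ‖x i - c‖ < r := by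
      intro i hiS
      have hle : ‖x i - c‖ ≤ r :=
        hr ▸ Finset.le_sup' (fun i => ‖x i - c‖) (mem_univ i)
      rcases hle.lt_or_eq with h | h
      · exact h
      · exact absurd (by simp [hS, h]) hiS
    have hτpos : ∀ i, 0 < τ i := by
      intro i
      by_cases hi : i ∈ S
      · simp only [hτ, if_pos hi]
        exact div_pos (sub_pos.2 (hfx i hi)) hN
      · simp only [hτ, if_neg hi]
        refine lt_min one_pos (div_pos ?_ (by positivity))
        have := hρlt i hi
        nlinarith [norm_nonneg (x i - c)]
    set t : ℝ := univ.inf' univ_nonempty τ with ht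
    have htpos : 0 < t := (Finset.lt_inf'_iff _).2 fun i _ => hτpos i
    have htle : ∀ i, t ≤ τ i := fun i => Finset.inf'_le _ (mem_univ i)
    have hlt : ∀ i, ‖x i - (c - t • v)‖ < r := by
      intro i
      have hkey : ‖x i - (c - t • v)‖ ^ 2 < r ^ 2 := by
        rw [hexp i t]
        by_cases hi : i ∈ S
        · have hxc : ‖x i - c‖ = r := by
            have := (Finset.mem_filter.1 hi).2; exact this
          have hti : t ≤ (f c - f (x i)) / N := by
            have := htle i; simp only [hτ, if_pos hi] at this; exact this
          have htN : t * N ≤ f c - f (x i) := (le_div_iff₀ hN).1 hti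
          rw [hxc]
          nlinarith [htpos, hN, mul_pos htpos (sub_pos.2 (hfx i hi))]
        · have hti : t ≤ min 1 ((r ^ 2 - ‖x i - c‖ ^ 2)
              / (2 * |f (x i) - f c| + N + 1)) := by
            have := htle i; simp only [hτ, if_neg hi] at this; exact this
          have ht1 : t ≤ 1 := hti.trans (min_le_left _ _)
          have ht2 : t * (2 * |f (x i) - f c| + N + 1)
              ≤ r ^ 2 - ‖x i - c‖ ^ 2 :=
            (le_div_iff₀ (by positivity)).1 (hti.trans (min_le_right _ _))
          nlinarith [mul_le_mul_of_nonneg_left (le_abs_self (f (x i) - f c)) htpos.le,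
            mul_le_mul_of_nonneg_right ht1 (mul_nonneg htpos.le hN.le),
            abs_nonneg (f (x i) - f c), htpos, hN]
      exact lt_of_pow_lt_pow_left₀ 2 hr0 hkey
    have hcontr : univ.sup' univ_nonempty
        (fun i => ‖x i - (c - t • v)‖) < r :=
      (Finset.sup'_lt_iff univ_nonempty).2 fun i _ => hlt i
    exact absurd (hmin (c - t • v)) (not_le.2 hcontr)

/-- The maximal variance of a complex random variable taking the values `x i`
is attained and equals the square of the radius of the smallest circle
circumscribing the points `x i`. -/
theorem max_variance_eq_radius_sq (d : ℕ) (hd : 1 ≤ d) (x : Fin d → ℂ) :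
    ∃ p : Fin d → ℝ, (∀ i, 0 ≤ p i) ∧ (∑ i, p i = 1) ∧
      (∀ q : Fin d → ℝ, (∀ i, 0 ≤ q i) → (∑ i, q i = 1) →
        ∑ i, q i * ‖x i - ∑ j, (q j : ℂ) * x j‖ ^ 2
          ≤ ∑ i, p i * ‖x i - ∑ j, (p j : ℂ) * x j‖ ^ 2) ∧
      ∑ i, p i * ‖x i - ∑ j, (p j : ℂ) * x j‖ ^ 2
        = ⨅ y : ℂ, (⨆ i, ‖x i - y‖) ^ 2 := by
  haveI inst : Nonempty (Fin d) := ⟨⟨0, hd⟩⟩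
  -- the Chebyshev center
  obtain ⟨c, hmin⟩ : ∃ c : ℂ, ∀ y : ℂ,
      univ.sup' univ_nonempty (fun i => ‖x i - c‖)
        ≤ univ.sup' univ_nonempty (fun i => ‖x i - y‖) := by
    set F : ℂ → ℝ := fun y => univ.sup' univ_nonempty (fun i => ‖x i - y‖) with hF
    have hcont : Continuous F := by
      apply Continuous.finset_sup'_apply univ_nonempty
      intro i _
      exact (continuous_norm.comp (continuous_const.sub continuous_id))
    obtain ⟨i0⟩ := inst
    have hcoer : Filter.Tendsto F (Filter.cocompact ℂ) Filter.atTop := by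
      have h1 : Filter.Tendsto (fun y : ℂ => ‖y‖ + -‖x i0‖) (Filter.cocompact ℂ) Filter.atTop :=
        Filter.tendsto_atTop_add_const_right _ _ tendsto_norm_cocompact_atTop
      refine Filter.tendsto_atTop_mono (fun y => ?_) h1
      calc ‖y‖ + -‖x i0‖ ≤ ‖x i0 - y‖ := by
            have := norm_sub_norm_le y (x i0)
            have h2 : ‖y - x i0‖ = ‖x i0 - y‖ := norm_sub_rev _ _
            linarith
        _ ≤ F y := Finset.le_sup' (fun i => ‖x i - y‖) (mem_univ i0)
    exact hcont.exists_forall_le hcoer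
  set r : ℝ := univ.sup' univ_nonempty (fun i => ‖x i - c‖) with hrdef
  have hr0 : 0 ≤ r := by
    obtain ⟨i1, _, hi1⟩ := Finset.exists_mem_eq_sup' (univ_nonempty)
      (fun i => ‖x i - c‖)
    rw [hrdef, hi1]; exact norm_nonneg _
  obtain ⟨p, hp0, hp1, hpc, hpS⟩ := center_in_hull x c hmin
  have hmean : (∑ j, (p j : ℂ) * x j) = c := by
    rw [← hpc]
    exact Finset.sum_congr rfl fun j _ => Complex.real_smul.symm
  have hvar : ∑ i, p i * ‖x i - ∑ j, (p j : ℂ) * x j‖ ^ 2 = r ^ 2 := by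
    rw [hmean]
    have : ∀ i ∈ univ, p i * ‖x i - c‖ ^ 2 = p i * r ^ 2 := by
      intro i _
      by_cases hpi : p i = 0
      · rw [hpi, zero_mul, zero_mul]
      · rw [hpS i hpi]
    rw [Finset.sum_congr rfl this, ← Finset.sum_mul, hp1, one_mul]
  have hsup_eq : ∀ y : ℂ, (⨆ i, ‖x i - y‖)
      = univ.sup' univ_nonempty (fun i => ‖x i - y‖) :=
    fun y => (Finset.sup'_univ_eq_ciSup _).symm
  refine ⟨p, hp0, hp1, ?_, ?_⟩
  · intro q hq0 hq1
    rw [hvar]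
    have h1 : ∑ i, q i * ‖x i - ∑ j, (q j : ℂ) * x j‖ ^ 2
        ≤ ∑ i, q i * ‖x i - c‖ ^ 2 := by
      rw [var_ident x q hq1 c]
      nlinarith [sq_nonneg (‖(∑ j, (q j : ℂ) * x j) - c‖)]
    refine h1.trans ?_
    calc ∑ i, q i * ‖x i - c‖ ^ 2 ≤ ∑ i, q i * r ^ 2 := by
          refine Finset.sum_le_sum fun i _ => ?_
          refine mul_le_mul_of_nonneg_left ?_ (hq0 i)
          refine pow_le_pow_left₀ (norm_nonneg _) ?_ 2
          exact Finset.le_sup' (fun i => ‖x i - c‖) (mem_univ i)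
      _ = r ^ 2 := by rw [← Finset.sum_mul, hq1, one_mul]
  · rw [hvar]
    refine le_antisymm ?_ ?_
    · refine le_ciInf fun y => ?_
      rw [hsup_eq y]
      exact pow_le_pow_left₀ hr0 (hmin y) 2
    · have hbdd : BddBelow (Set.range fun y : ℂ => (⨆ i, ‖x i - y‖) ^ 2) := by
        refine ⟨0, ?_⟩
        rintro z ⟨y, rfl⟩
        positivity
      have := ciInf_le hbdd c
      rwa [hsup_eq c, ← hrdef] at this
end

section
/- Let d ≥ 2 and let N be a norm on ℂ^d that is permutation invariant (N(x ∘ π) = N(x) for every permutation π of Fin d) and invariant under multiplying each coordinate by a unimodular complex number. For x : Fin d → ℂ, let M₁ ≥ M₂ denote the largest and second largest values among the moduli |x i|, and let F = (1, 1, 0, …, 0) ∈ ℂ^d. Then (M₁ + M₂)/2 ≤ N(x)/N(F) ≤ max(M₁, (∑ i, |x i|)/2). -/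
open BigOperators

/-- The entries of `v` sorted in non-increasing order: `sortedDesc v 0` is the largest, etc. -/
noncomputable def sortedDesc {d : ℕ} (v : Fin d → ℝ) : Fin d → ℝ :=
  fun k => v (Tuple.sort v k.rev)

namespace PiNormAux

variable {d : ℕ}

/-- coercion of a real vector to a complex vector -/
def RC (a : Fin d → ℝ) : Fin d → ℂ := fun i => (a i : ℂ)

/-- pair indicator vector -/
def pv (i j : Fin d) : Fin d → ℂ := fun k => if k = i ∨ k = j then 1 else 0

theorem N_zero (N : (Fin d → ℂ) → ℝ)
    (hN_smul : ∀ (a : ℂ) (u : Fin d → ℂ), N (a • u) = ‖a‖ * N u) :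
    N 0 = 0 := by
  have := hN_smul 0 0
  simpa using this

theorem N_sum (N : (Fin d → ℂ) → ℝ)
    (hN_triangle : ∀ u v : Fin d → ℂ, N (u + v) ≤ N u + N v)
    (hN_smul : ∀ (a : ℂ) (u : Fin d → ℂ), N (a • u) = ‖a‖ * N u)
    {ι : Type*} (s : Finset ι) (f : ι → (Fin d → ℂ)) :
    N (∑ i ∈ s, f i) ≤ ∑ i ∈ s, N (f i) := by
  classical
  induction s using Finset.cons_induction with
  | empty => simp [N_zero N hN_smul]
  | cons a s ha ih =>
      rw [Finset.sum_cons, Finset.sum_cons]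
      exact le_trans (hN_triangle _ _) (by linarith)

theorem N_abs (N : (Fin d → ℂ) → ℝ)
    (hN_unimod : ∀ (w u : Fin d → ℂ), (∀ i, ‖w i‖ = 1) →
      N (fun i => w i * u i) = N u)
    (u : Fin d → ℂ) :
    N (fun i => (‖u i‖ : ℂ)) = N u := by
  classical
  set w : Fin d → ℂ := fun i => if u i = 0 then 1 else u i / ‖u i‖ with hw
  have hw1 : ∀ i, ‖w i‖ = 1 := by
    intro i
    by_cases h : u i = 0
    · simp [hw, h]
    · simp [hw, h, norm_div, Complex.norm_real, Real.norm_eq_abs, abs_of_nonneg (norm_nonneg (u i)),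
        div_self (norm_ne_zero_iff.mpr h)]
  have key := hN_unimod w (fun i => (‖u i‖ : ℂ)) hw1
  have : (fun i => w i * (‖u i‖ : ℂ)) = u := by
    funext i
    by_cases h : u i = 0
    · simp [hw, h]
    · have habs : (‖u i‖ : ℂ) ≠ 0 := by
        simpa using norm_ne_zero_iff.mpr h
      simp only [hw, h, if_false]
      exact div_mul_cancel₀ _ habs
  rw [this] at key
  exact key.symm


theorem N_flip (N : (Fin d → ℂ) → ℝ)
    (hN_unimod : ∀ (w u : Fin d → ℂ), (∀ i, ‖w i‖ = 1) →
      N (fun i => w i * u i) = N u)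
    (u : Fin d → ℂ) (j : Fin d) :
    N (Function.update u j (-(u j))) = N u := by
  classical
  have key := hN_unimod (fun i => if i = j then -1 else 1) u (by
    intro i; by_cases h : i = j <;> simp [h])
  have : (fun i => (if i = j then (-1:ℂ) else 1) * u i) = Function.update u j (-(u j)) := by
    funext i
    by_cases h : i = j
    · subst h; simp [Function.update_self]
    · simp [h, Function.update_of_ne h]
  rw [this] at key
  exact key

theorem N_scale (N : (Fin d → ℂ) → ℝ)
    (hN_triangle : ∀ u v : Fin d → ℂ, N (u + v) ≤ N u + N v)
    (hN_smul : ∀ (a : ℂ) (u : Fin d → ℂ), N (a • u) = ‖a‖ * N u)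
    (hN_unimod : ∀ (w u : Fin d → ℂ), (∀ i, ‖w i‖ = 1) →
      N (fun i => w i * u i) = N u)
    (u : Fin d → ℂ) (j : Fin d) (c : ℝ) (hc0 : 0 ≤ c) (hc1 : c ≤ 1) :
    N (Function.update u j ((c : ℂ) * u j)) ≤ N u := by
  classical
  have key : Function.update u j ((c : ℂ) * u j)
      = (((1+c)/2 : ℝ) : ℂ) • u + (((1-c)/2 : ℝ) : ℂ) • (Function.update u j (-(u j))) := by
    funext i
    by_cases h : i = j
    · subst h
      simp only [Function.update_self, Pi.add_apply, Pi.smul_apply, smul_eq_mul]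
      push_cast
      ring
    · simp only [Function.update_of_ne h, Pi.add_apply, Pi.smul_apply, smul_eq_mul]
      push_cast
      ring
  rw [key]
  have h1 := hN_triangle ((((1+c)/2 : ℝ) : ℂ) • u) ((((1-c)/2 : ℝ) : ℂ) • (Function.update u j (-(u j))))
  rw [hN_smul, hN_smul, N_flip N hN_unimod u j] at h1
  rw [Complex.norm_real, Real.norm_eq_abs, Complex.norm_real, Real.norm_eq_abs, abs_of_nonneg (by linarith), abs_of_nonneg (by linarith)] at h1
  nlinarith [h1]

theorem N_mono_real (N : (Fin d → ℂ) → ℝ)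
    (hN_triangle : ∀ u v : Fin d → ℂ, N (u + v) ≤ N u + N v)
    (hN_smul : ∀ (a : ℂ) (u : Fin d → ℂ), N (a • u) = ‖a‖ * N u)
    (hN_unimod : ∀ (w u : Fin d → ℂ), (∀ i, ‖w i‖ = 1) →
      N (fun i => w i * u i) = N u)
    (a b : Fin d → ℝ) (ha : ∀ i, 0 ≤ a i) (hab : ∀ i, a i ≤ b i) :
    N (RC a) ≤ N (RC b) := by
  classical
  have main : ∀ s : Finset (Fin d),
      N (fun i => if i ∈ s then (a i : ℂ) else (b i : ℂ)) ≤ N (RC b) := by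
    intro s
    induction s using Finset.induction_on with
    | empty => exact le_of_eq (by rfl)
    | @insert j s' hj ih =>
        
        set g : Fin d → ℂ := fun i => if i ∈ s' then (a i : ℂ) else (b i : ℂ) with hg
        set c : ℝ := if b j = 0 then 0 else a j / b j with hc
        have hbj : 0 ≤ b j := le_trans (ha j) (hab j)
        have hc0 : 0 ≤ c := by
          by_cases h : b j = 0
          · simp [hc, h]
          · simp only [hc, h, if_false]
            exact div_nonneg (ha j) hbj
        have hc1 : c ≤ 1 := by
          by_cases h : b j = 0
          · simp [hc, h]
          · simp only [hc, h, if_false]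
            rw [div_le_one (lt_of_le_of_ne hbj (Ne.symm h))]
            exact hab j
        have heq : (fun i => if i ∈ insert j s' then (a i : ℂ) else (b i : ℂ))
            = Function.update g j ((c : ℂ) * g j) := by
          funext i
          by_cases h : i = j
          · subst h
            simp only [Finset.mem_insert, true_or, if_true, Function.update_self, hg, hj,
              if_false]
            by_cases hb : b i = 0
            · have : a i = 0 := le_antisymm (hb ▸ hab i) (ha i)
              simp [hc, hb, this]
            · simp only [hc, hb, if_false]
              have hbc : ((b i : ℝ) : ℂ) ≠ 0 := by exact_mod_cast hb
              push_cast
              field_simp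
          · simp only [Finset.mem_insert, h, false_or, Function.update_of_ne h, hg]
        rw [heq]
        exact le_trans (N_scale N hN_triangle hN_smul hN_unimod g j c hc0 hc1) ih
  have := main Finset.univ
  simp only [Finset.mem_univ, if_true] at this
  exact this

/-- monotonicity in moduli -/
theorem N_mono (N : (Fin d → ℂ) → ℝ)
    (hN_triangle : ∀ u v : Fin d → ℂ, N (u + v) ≤ N u + N v)
    (hN_smul : ∀ (a : ℂ) (u : Fin d → ℂ), N (a • u) = ‖a‖ * N u)
    (hN_unimod : ∀ (w u : Fin d → ℂ), (∀ i, ‖w i‖ = 1) →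
      N (fun i => w i * u i) = N u)
    (u v : Fin d → ℂ) (h : ∀ i, ‖v i‖ ≤ ‖u i‖) :
    N v ≤ N u := by
  rw [← N_abs N hN_unimod u, ← N_abs N hN_unimod v]
  exact N_mono_real N hN_triangle hN_smul hN_unimod _ _
    (fun i => norm_nonneg _) h

theorem N_pv (N : (Fin d → ℂ) → ℝ) (hd : 2 ≤ d)
    (hN_perm : ∀ (π : Equiv.Perm (Fin d)) (u : Fin d → ℂ), N (u ∘ π) = N u)
    (F : Fin d → ℂ) (hF : F = fun i : Fin d => if i.val < 2 then (1 : ℂ) else 0)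
    (i j : Fin d) (hij : i ≠ j) :
    N (pv i j) = N F := by
  classical
  set i0 : Fin d := ⟨0, by omega⟩
  set i1 : Fin d := ⟨1, by omega⟩
  have h01 : i0 ≠ i1 := by simp [i0, i1, Fin.ext_iff]
  set σ₁ : Equiv.Perm (Fin d) := Equiv.swap i0 i
  set j' : Fin d := σ₁ j
  have hj'0 : j' ≠ i0 := by
    intro h
    have : j = σ₁ i0 := by
      have := congrArg σ₁ h
      simpa [σ₁, j'] using this
    simp [σ₁, Equiv.swap_apply_left] at this
    exact hij this.symm
  set τ : Equiv.Perm (Fin d) := Equiv.swap i1 j'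
  set σ : Equiv.Perm (Fin d) := σ₁.trans τ |>.symm.symm
  have hσ : ∀ k, (σ₁ (τ k)) = (τ.trans σ₁) k := fun k => rfl
  have hσ0 : σ₁ (τ i0) = i := by
    have : τ i0 = i0 := Equiv.swap_apply_of_ne_of_ne h01 hj'0.symm
    rw [this]
    simp [σ₁, Equiv.swap_apply_left]
  have hσ1 : σ₁ (τ i1) = j := by
    rw [Equiv.swap_apply_left]
    simp [j', σ₁]
  set π : Equiv.Perm (Fin d) := τ.trans σ₁
  have key : pv i j = F ∘ π.symm := by
    funext k
    simp only [Function.comp_apply, hF, pv]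
    have hπ0 : π.symm i = i0 := by
      rw [show i = π i0 from hσ0.symm]; exact π.symm_apply_apply i0
    have hπ1 : π.symm j = i1 := by
      rw [show j = π i1 from hσ1.symm]; exact π.symm_apply_apply i1
    by_cases hk : k = i ∨ k = j
    · rcases hk with hk | hk
      · rw [hk, hπ0]
        simp [i0]
      · rw [hk, hπ1]
        simp [i1]
    · push_neg at hk
      have h0 : π.symm k ≠ i0 := by
        intro h
        have : k = π i0 := by rw [← h, Equiv.apply_symm_apply]
        exact hk.1 (by rw [this]; exact hσ0)
      have h1 : π.symm k ≠ i1 := by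
        intro h
        have : k = π i1 := by rw [← h, Equiv.apply_symm_apply]
        exact hk.2 (by rw [this]; exact hσ1)
      have : ¬ (π.symm k).val < 2 := by
        intro h
        interval_cases h' : (π.symm k).val
        · exact h0 (Fin.ext (by simp [i0, h']))
        · exact h1 (Fin.ext (by simp [i1, h']))
      simp [this, hk.1, hk.2]
  rw [key, hN_perm]

/-- single basis vector -/
def ev (i : Fin d) : Fin d → ℂ := fun k => if k = i then 1 else 0

theorem N_ev (N : (Fin d → ℂ) → ℝ) (hd : 2 ≤ d)
    (hN_triangle : ∀ u v : Fin d → ℂ, N (u + v) ≤ N u + N v)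
    (hN_smul : ∀ (a : ℂ) (u : Fin d → ℂ), N (a • u) = ‖a‖ * N u)
    (hN_perm : ∀ (π : Equiv.Perm (Fin d)) (u : Fin d → ℂ), N (u ∘ π) = N u)
    (hN_unimod : ∀ (w u : Fin d → ℂ), (∀ i, ‖w i‖ = 1) →
      N (fun i => w i * u i) = N u)
    (F : Fin d → ℂ) (hF : F = fun i : Fin d => if i.val < 2 then (1 : ℂ) else 0)
    (i : Fin d) :
    N (ev i) ≤ N F := by
  classical
  set i0 : Fin d := ⟨0, by omega⟩
  set i1 : Fin d := ⟨1, by omega⟩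
  have h01 : i0 ≠ i1 := by simp [i0, i1, Fin.ext_iff]
  set j : Fin d := if i = i0 then i1 else i0 with hj
  have hij : i ≠ j := by
    by_cases h : i = i0 <;> simp [hj, h, h01]
  calc N (ev i) ≤ N (pv i j) := by
        apply N_mono N hN_triangle hN_smul hN_unimod
        intro k
        by_cases hk : k = i
        · simp [ev, pv, hk]
        · by_cases hk2 : k = j <;> simp [ev, pv, hk, hk2, Ne.symm hij]
    _ = N F := N_pv N hd hN_perm F hF i j hij

theorem N_halfsum (N : (Fin d → ℂ) → ℝ) (hd : 2 ≤ d)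
    (hN_triangle : ∀ u v : Fin d → ℂ, N (u + v) ≤ N u + N v)
    (hN_smul : ∀ (a : ℂ) (u : Fin d → ℂ), N (a • u) = ‖a‖ * N u)
    (hN_perm : ∀ (π : Equiv.Perm (Fin d)) (u : Fin d → ℂ), N (u ∘ π) = N u)
    (F : Fin d → ℂ) (hF : F = fun i : Fin d => if i.val < 2 then (1 : ℂ) else 0)
    (a : Fin d → ℝ) (ha : ∀ i, 0 ≤ a i) (i : Fin d)
    (hi : 2 * a i = ∑ j, a j) :
    N (RC a) ≤ ((∑ j, a j) / 2) * N F := by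
  classical
  have herase : ∑ j ∈ Finset.univ.erase i, a j = a i := by
    have := Finset.sum_erase_add Finset.univ a (Finset.mem_univ i)
    linarith
  have hkey : RC a = ∑ j ∈ Finset.univ.erase i, (a j : ℂ) • pv i j := by
    funext k
    simp only [RC, Finset.sum_apply, Pi.smul_apply, smul_eq_mul, pv]
    by_cases hk : k = i
    · subst hk
      simp only [true_or, if_true, mul_one]
      rw [show (∑ j ∈ Finset.univ.erase k, (a j : ℂ)) = ((∑ j ∈ Finset.univ.erase k, a j : ℝ) : ℂ) by push_cast; ring]
      rw [herase]
    · have : ∀ j ∈ Finset.univ.erase i,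
          (a j : ℂ) * (if k = i ∨ k = j then 1 else 0) = if k = j then (a j : ℂ) else 0 := by
        intro j _
        by_cases hkj : k = j <;> simp [hk, hkj]
      rw [Finset.sum_congr rfl this, Finset.sum_ite_eq (Finset.univ.erase i) k (fun j => (a j : ℂ))]
      simp [hk]
  rw [hkey]
  calc N (∑ j ∈ Finset.univ.erase i, (a j : ℂ) • pv i j)
      ≤ ∑ j ∈ Finset.univ.erase i, N ((a j : ℂ) • pv i j) :=
        N_sum N hN_triangle hN_smul _ _
    _ = ∑ j ∈ Finset.univ.erase i, a j * N F := by
        apply Finset.sum_congr rfl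
        intro j hj
        rw [hN_smul, Complex.norm_real, Real.norm_eq_abs, abs_of_nonneg (ha j),
          N_pv N hd hN_perm F hF i j (Ne.symm (Finset.mem_erase.mp hj).1)]
    _ = ((∑ j, a j) / 2) * N F := by
        rw [← Finset.sum_mul, herase]
        congr 1
        linarith

theorem lemA (N : (Fin d → ℂ) → ℝ) (hd : 2 ≤ d)
    (hN_triangle : ∀ u v : Fin d → ℂ, N (u + v) ≤ N u + N v)
    (hN_smul : ∀ (a : ℂ) (u : Fin d → ℂ), N (a • u) = ‖a‖ * N u)
    (hN_perm : ∀ (π : Equiv.Perm (Fin d)) (u : Fin d → ℂ), N (u ∘ π) = N u)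
    (F : Fin d → ℂ) (hF : F = fun i : Fin d => if i.val < 2 then (1 : ℂ) else 0)
    (hNF : 0 ≤ N F) :
    ∀ n : ℕ, ∀ a : Fin d → ℝ, (∀ i, 0 ≤ a i) → (∀ i, 2 * a i ≤ ∑ j, a j) →
      (Finset.univ.filter fun i => a i ≠ 0).card ≤ n →
      N (RC a) ≤ ((∑ j, a j) / 2) * N F := by
  classical
  intro n
  induction n with
  | zero =>
      intro a ha _ hcard
      have hz : ∀ i, a i = 0 := by
        intro i
        by_contra h
        have : i ∈ Finset.univ.filter fun i => a i ≠ 0 := by simp [h]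
        have := Finset.card_pos.mpr ⟨i, this⟩
        omega
      have h1 : RC a = 0 := funext fun i => by simp [RC, hz i]
      rw [h1, N_zero N hN_smul]
      have h2 : ∑ j, a j = 0 := Finset.sum_eq_zero fun j _ => hz j
      rw [h2]
      simp
  | succ n ih =>
      intro a ha hhalf hcard
      set S := ∑ j, a j with hS
      by_cases hex : ∃ i, 2 * a i = S
      · obtain ⟨i, hi⟩ := hex
        exact N_halfsum N hd hN_triangle hN_smul hN_perm F hF a ha i hi
      push_neg at hex
      by_cases ha0 : ∀ i, a i = 0
      · have h1 : RC a = 0 := funext fun i => by simp [RC, ha0 i]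
        rw [h1, N_zero N hN_smul]
        have h2 : S = 0 := Finset.sum_eq_zero fun j _ => ha0 j
        rw [h2]
        simp
      push_neg at ha0
      obtain ⟨i₀, hi₀⟩ := ha0
      have hi₀pos : 0 < a i₀ := lt_of_le_of_ne (ha i₀) (Ne.symm hi₀)
      -- argmax
      obtain ⟨im, -, hmax⟩ := Finset.exists_max_image Finset.univ a ⟨i₀, Finset.mem_univ i₀⟩
      have hmax' : ∀ m, a m ≤ a im := fun m => hmax m (Finset.mem_univ m)
      set M := a im with hM
      have hMpos : 0 < M := lt_of_lt_of_le hi₀pos (hmax' i₀)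
      have hslack : 2 * M < S := lt_of_le_of_ne (hhalf im) (hex im)
      -- find j ≠ im with a j > 0
      have hsum_erase : ∑ m ∈ Finset.univ.erase im, a m = S - M := by
        have := Finset.sum_erase_add Finset.univ a (Finset.mem_univ im)
        simp only [← hS, ← hM] at this ⊢
        linarith
      have hj_ex : ∃ j ∈ Finset.univ.erase im, a j ≠ 0 := by
        apply Finset.exists_ne_zero_of_sum_ne_zero
        rw [hsum_erase]
        intro h
        nlinarith
      obtain ⟨j, hjmem, hja⟩ := hj_ex
      have hjim : j ≠ im := (Finset.mem_erase.mp hjmem).1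
      have hjpos : 0 < a j := lt_of_le_of_ne (ha j) (Ne.symm hja)
      -- find k ∉ {im, j} with a k > 0
      have hsum_erase2 : ∑ m ∈ (Finset.univ.erase im).erase j, a m = S - M - a j := by
        have := Finset.sum_erase_add (Finset.univ.erase im) a hjmem
        rw [hsum_erase] at this
        linarith
      have hk_ex : ∃ k ∈ (Finset.univ.erase im).erase j, a k ≠ 0 := by
        apply Finset.exists_ne_zero_of_sum_ne_zero
        rw [hsum_erase2]
        have : a j ≤ M := hmax' j
        intro h
        nlinarith
      obtain ⟨k, hkmem, hka⟩ := hk_ex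
      have hkj : k ≠ j := (Finset.mem_erase.mp hkmem).1
      have hkim : k ≠ im := (Finset.mem_erase.mp ((Finset.mem_erase.mp hkmem).2)).1
      have hkpos : 0 < a k := lt_of_le_of_ne (ha k) (Ne.symm hka)
      -- the amount to subtract
      set t := min (min (a j) (a k)) ((S - 2 * M) / 2) with ht
      have ht0 : 0 ≤ t := le_min (le_min hjpos.le hkpos.le) (by linarith)
      have htj : t ≤ a j := le_trans (min_le_left _ _) (min_le_left _ _)
      have htk : t ≤ a k := le_trans (min_le_left _ _) (min_le_right _ _)
      have hts : t ≤ (S - 2 * M) / 2 := min_le_right _ _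
      set a' : Fin d → ℝ := fun m => if m = j ∨ m = k then a m - t else a m with ha'
      have ha'nonneg : ∀ m, 0 ≤ a' m := by
        intro m
        simp only [ha']
        by_cases h : m = j ∨ m = k
        · rcases h with h | h <;> simp [h, hkj] <;> [linarith; linarith]
        · simp [h]; exact ha m
      have ha'le : ∀ m, a' m ≤ a m := by
        intro m
        simp only [ha']
        by_cases h : m = j ∨ m = k <;> simp [h] <;> linarith
      have hsum' : ∑ m, a' m = S - 2 * t := by
        have hsplit : ∀ m : Fin d, a' m = a m - ((if m = j then t else 0) + (if m = k then t else 0)) := by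
          intro m
          simp only [ha']
          by_cases h1 : m = j
          · subst h1
            rw [if_pos (Or.inl rfl), if_pos rfl, if_neg (Ne.symm hkj)]
            ring
          · by_cases h2 : m = k
            · subst h2
              rw [if_pos (Or.inr rfl), if_neg h1, if_pos rfl]
              ring
            · rw [if_neg (by tauto), if_neg h1, if_neg h2]
              ring
        rw [Finset.sum_congr rfl (fun m _ => hsplit m)]
        rw [Finset.sum_sub_distrib, Finset.sum_add_distrib]
        simp [Finset.sum_ite_eq', ← hS]
        ring
      have hdecomp : RC a = RC a' + (t : ℂ) • pv j k := by
        funext m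
        simp only [RC, Pi.add_apply, Pi.smul_apply, smul_eq_mul, pv, ha']
        by_cases h : m = j ∨ m = k
        · simp only [h, if_true, mul_one]
          push_cast; ring
        · simp only [h, if_false, mul_zero, add_zero]
      have hbound : N (RC a) ≤ N (RC a') + t * N F := by
        rw [hdecomp]
        refine le_trans (hN_triangle _ _) ?_
        rw [hN_smul, Complex.norm_real, Real.norm_eq_abs, abs_of_nonneg ht0,
          N_pv N hd hN_perm F hF j k (Ne.symm hkj)]
      have hhalf' : ∀ m, 2 * a' m ≤ ∑ l, a' l := by
        intro m
        rw [hsum']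
        have h1 : a' m ≤ M := le_trans (ha'le m) (hmax' m)
        linarith
      -- two cases
      by_cases hcase : t = (S - 2 * M) / 2
      · -- the entry im now achieves half the sum
        have him' : 2 * a' im = ∑ l, a' l := by
          rw [hsum', hcase]
          have : a' im = M := by simp [ha', Ne.symm hjim, Ne.symm hkim, hM]
          rw [this]; ring
        have := N_halfsum N hd hN_triangle hN_smul hN_perm F hF a' ha'nonneg im him'
        rw [hsum'] at this
        calc N (RC a) ≤ N (RC a') + t * N F := hbound
          _ ≤ ((S - 2 * t) / 2) * N F + t * N F := by linarith
          _ = (S / 2) * N F := by ring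
      · -- support drops
        have hmin : t = min (a j) (a k) := by
          rcases le_total (min (a j) (a k)) ((S - 2 * M) / 2) with h | h
          · rw [ht, min_eq_left h]
          · exact absurd (le_antisymm hts (by rw [ht]; exact le_min h (le_refl _))) hcase
        have hzero : a' j = 0 ∨ a' k = 0 := by
          rcases le_total (a j) (a k) with h | h
          · left; simp [ha', hmin, min_eq_left h]
          · right; simp [ha', hmin, min_eq_right h, hkj]
        obtain ⟨l, hl_mem, hl_zero⟩ : ∃ l, (l = j ∨ l = k) ∧ a' l = 0 := by
          rcases hzero with h | h
          · exact ⟨j, Or.inl rfl, h⟩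
          · exact ⟨k, Or.inr rfl, h⟩
        have hl_pos : a l ≠ 0 := by rcases hl_mem with h | h <;> subst h <;> [exact hja; exact hka]
        have hsubset : (Finset.univ.filter fun m => a' m ≠ 0) ⊆ (Finset.univ.filter fun m => a m ≠ 0).erase l := by
          intro m hm
          simp only [Finset.mem_filter, Finset.mem_univ, true_and] at hm
          rw [Finset.mem_erase]
          constructor
          · intro h; exact hm (h ▸ hl_zero)
          · simp only [Finset.mem_filter, Finset.mem_univ, true_and]
            intro h
            apply hm
            have := ha'le m
            have := ha'nonneg m
            have : a' m ≤ 0 := by rw [← h]; exact ha'le m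
            linarith [ha'nonneg m]
        have hcard' : (Finset.univ.filter fun m => a' m ≠ 0).card ≤ n := by
          have h1 : l ∈ Finset.univ.filter fun m => a m ≠ 0 := by simp [hl_pos]
          have h2 := Finset.card_le_card hsubset
          have h3 := Finset.card_erase_of_mem h1
          omega
        have := ih a' ha'nonneg hhalf' hcard'
        rw [hsum'] at this
        calc N (RC a) ≤ N (RC a') + t * N F := hbound
          _ ≤ ((S - 2 * t) / 2) * N F + t * N F := by linarith
          _ = (S / 2) * N F := by ring

theorem keyUpper (N : (Fin d → ℂ) → ℝ) (hd : 2 ≤ d)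
    (hN_triangle : ∀ u v : Fin d → ℂ, N (u + v) ≤ N u + N v)
    (hN_smul : ∀ (a : ℂ) (u : Fin d → ℂ), N (a • u) = ‖a‖ * N u)
    (hN_perm : ∀ (π : Equiv.Perm (Fin d)) (u : Fin d → ℂ), N (u ∘ π) = N u)
    (hN_unimod : ∀ (w u : Fin d → ℂ), (∀ i, ‖w i‖ = 1) →
      N (fun i => w i * u i) = N u)
    (F : Fin d → ℂ) (hF : F = fun i : Fin d => if i.val < 2 then (1 : ℂ) else 0)
    (hNF : 0 ≤ N F)
    (a : Fin d → ℝ) (ha : ∀ i, 0 ≤ a i) (M : ℝ) (hM : ∀ i, a i ≤ M) :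
    N (RC a) ≤ max M ((∑ j, a j) / 2) * N F := by
  classical
  set S := ∑ j, a j with hS
  have hne : (Finset.univ : Finset (Fin d)).Nonempty := ⟨⟨0, by omega⟩, Finset.mem_univ _⟩
  obtain ⟨im, -, hmaxim⟩ := Finset.exists_max_image Finset.univ a hne
  have hmax' : ∀ m, a m ≤ a im := fun m => hmaxim m (Finset.mem_univ m)
  set Mt := a im with hMt
  have hsum_erase : ∑ m ∈ Finset.univ.erase im, a m = S - Mt := by
    have := Finset.sum_erase_add Finset.univ a (Finset.mem_univ im)
    simp only [← hS, ← hMt] at this ⊢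
    linarith
  have hSMt : 0 ≤ S - Mt := by
    rw [← hsum_erase]
    exact Finset.sum_nonneg fun m _ => ha m
  by_cases hc : 2 * Mt ≤ S
  · have hhalf : ∀ i, 2 * a i ≤ S := fun i => le_trans (by linarith [hmax' i]) hc
    have := lemA N hd hN_triangle hN_smul hN_perm F hF hNF
      (Finset.univ.filter fun i => a i ≠ 0).card a ha hhalf (le_refl _)
    refine le_trans this ?_
    exact mul_le_mul_of_nonneg_right (le_max_right _ _) hNF
  · push_neg at hc
    set w : Fin d → ℝ := Function.update a im (S - Mt) with hw
    have hwnonneg : ∀ m, 0 ≤ w m := by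
      intro m
      by_cases h : m = im
      · subst h; simp [hw, Function.update_self]; linarith
      · simp [hw, Function.update_of_ne h]; exact ha m
    have hwsum : ∑ m, w m = 2 * (S - Mt) := by
      rw [hw, Finset.sum_update_of_mem (Finset.mem_univ im),
        Finset.sdiff_singleton_eq_erase, hsum_erase]
      ring
    have hwhalf : 2 * w im = ∑ m, w m := by
      rw [hwsum, hw, Function.update_self]
    have hNw := N_halfsum N hd hN_triangle hN_smul hN_perm F hF w hwnonneg im hwhalf
    rw [hwsum] at hNw
    have hdecomp : RC a = RC w + ((2 * Mt - S : ℝ) : ℂ) • ev im := by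
      funext m
      simp only [RC, Pi.add_apply, Pi.smul_apply, smul_eq_mul, ev]
      by_cases h : m = im
      · subst h
        rw [hw]
        simp only [Function.update_self, if_pos rfl, mul_one, hMt, hS]
        push_cast
        ring
      · rw [hw]
        simp [Function.update_of_ne h, h]
    have hNe := N_ev N hd hN_triangle hN_smul hN_perm hN_unimod F hF im
    have hNev_nonneg : 0 ≤ N (ev im) := by
      by_cases h : (ev im : Fin d → ℂ) = 0
      · rw [h, N_zero N hN_smul]
      · -- nonnegativity follows since N (ev im) = |1| * N (ev im); just use triangle trick
        have h2 := hN_triangle (ev im) (-(ev im))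
        have h3 : N (-(ev im)) = N (ev im) := by
          have := hN_smul (-1) (ev im)
          simpa using this
        have h4 : (ev im : Fin d → ℂ) + (-(ev im)) = 0 := by ring
        rw [h4, N_zero N hN_smul, h3] at h2
        linarith
    calc N (RC a) ≤ N (RC w) + ‖((2 * Mt - S : ℝ) : ℂ)‖ * N (ev im) := by
          rw [hdecomp]
          refine le_trans (hN_triangle _ _) ?_
          rw [hN_smul]
      _ ≤ (2 * (S - Mt)) / 2 * N F + (2 * Mt - S) * N F := by
          rw [Complex.norm_real, Real.norm_eq_abs, abs_of_nonneg (by linarith)]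
          have := mul_le_mul_of_nonneg_left hNe (by linarith : (0:ℝ) ≤ 2 * Mt - S)
          linarith
      _ = Mt * N F := by ring
      _ ≤ max M (S / 2) * N F :=
          mul_le_mul_of_nonneg_right (le_trans (hM im) (le_max_left _ _)) hNF

end PiNormAux

/-- For a permutation invariant norm `N` on `ℂ^d` (invariant under permutations of the
coordinates and under multiplication of each coordinate by a unimodular number), and
`F = (1,1,0,…,0)`, every `x` satisfies
`(M₁ + M₂)/2 ≤ N(x)/N(F) ≤ max(M₁, (∑ i, |x i|)/2)`,
where `M₁ ≥ M₂` are the two largest moduli of the entries of `x`. -/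
theorem pi_norm_two_largest_bounds (d : ℕ) (hd : 2 ≤ d)
    (N : (Fin d → ℂ) → ℝ)
    (hN_triangle : ∀ u v : Fin d → ℂ, N (u + v) ≤ N u + N v)
    (hN_smul : ∀ (a : ℂ) (u : Fin d → ℂ), N (a • u) = ‖a‖ * N u)
    (hN_pos : ∀ u : Fin d → ℂ, u ≠ 0 → 0 < N u)
    (hN_perm : ∀ (π : Equiv.Perm (Fin d)) (u : Fin d → ℂ), N (u ∘ π) = N u)
    (hN_unimod : ∀ (w u : Fin d → ℂ), (∀ i, ‖w i‖ = 1) →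
      N (fun i => w i * u i) = N u)
    (x : Fin d → ℂ)
    (F : Fin d → ℂ) (hF : F = fun i : Fin d => if i.val < 2 then (1 : ℂ) else 0) :
    (sortedDesc (fun i => ‖x i‖) ⟨0, by omega⟩
        + sortedDesc (fun i => ‖x i‖) ⟨1, by omega⟩) / 2
      ≤ N x / N F
    ∧ N x / N F
      ≤ max (sortedDesc (fun i => ‖x i‖) ⟨0, by omega⟩)
          ((∑ i, ‖x i‖) / 2) := by
  classical
  open PiNormAux in
  set v : Fin d → ℝ := fun i => ‖x i‖ with hv
  set σ : Equiv.Perm (Fin d) := Fin.revPerm.trans (Tuple.sort v) with hσ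
  set a : Fin d → ℝ := fun k => v (σ k) with haa
  set i0 : Fin d := ⟨0, by omega⟩ with hi0
  set i1 : Fin d := ⟨1, by omega⟩ with hi1
  have hsd : ∀ k, sortedDesc v k = a k := fun k => rfl
  have ha : ∀ i, 0 ≤ a i := fun i => norm_nonneg _
  have hNx : N x = N (PiNormAux.RC a) := by
    rw [← PiNormAux.N_abs N hN_unimod x]
    have h2 : PiNormAux.RC a = (fun i => ((‖x i‖ : ℝ) : ℂ)) ∘ σ := rfl
    rw [h2, hN_perm]
  have hsum : ∑ i, a i = ∑ i, ‖x i‖ := Equiv.sum_comp σ v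
  have hmono := Tuple.monotone_sort v
  have hmax : ∀ m, a m ≤ a i0 := by
    intro m
    have h1 : (m : Fin d).rev ≤ i0.rev := by
      rw [Fin.rev_le_rev]
      exact Fin.mk_le_of_le_val (Nat.zero_le _)
    exact hmono h1
  have hFne : F ≠ 0 := by
    intro h
    have := congrFun h i0
    rw [hF] at this
    simp [hi0] at this
  have hNF : 0 < N F := hN_pos F hFne
  constructor
  · -- lower bound
    set b : Fin d → ℂ := fun m => if m.val < 2 then ((a m : ℝ) : ℂ) else 0 with hb
    have hble : N b ≤ N x := by
      rw [hNx]
      apply PiNormAux.N_mono N hN_triangle hN_smul hN_unimod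
      intro i
      by_cases h : (i : Fin d).val < 2
      · simp only [hb, h, if_true, PiNormAux.RC]
        exact le_refl _
      · simp only [hb, h, if_false, PiNormAux.RC, norm_zero]
        positivity
    have h01 : i0 ≠ i1 := by simp [hi0, hi1, Fin.ext_iff]
    have hswap : b + b ∘ (Equiv.swap i0 i1) = ((a i0 + a i1 : ℝ) : ℂ) • F := by
      funext m
      simp only [Pi.add_apply, Function.comp_apply, Pi.smul_apply, smul_eq_mul, hF]
      by_cases h : (m : Fin d).val < 2
      · have hm : m = i0 ∨ m = i1 := by
          rcases (by omega : (m : Fin d).val = 0 ∨ (m : Fin d).val = 1) with h' | h'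
          · exact Or.inl (Fin.ext h')
          · exact Or.inr (Fin.ext h')
        rcases hm with hm | hm
        · subst hm
          rw [Equiv.swap_apply_left]
          have e0 : (i0 : Fin d).val < 2 := by simp [hi0]
          have e1 : (i1 : Fin d).val < 2 := by simp [hi1]
          simp only [hb, if_pos e0, if_pos e1]
          push_cast
          ring
        · subst hm
          rw [Equiv.swap_apply_right]
          have e0 : (i0 : Fin d).val < 2 := by simp [hi0]
          have e1 : (i1 : Fin d).val < 2 := by simp [hi1]
          simp only [hb, if_pos e0, if_pos e1]
          push_cast
          ring
      · have hm0 : m ≠ i0 := fun hh => h (by rw [hh]; simp [hi0])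
        have hm1 : m ≠ i1 := fun hh => h (by rw [hh]; simp [hi1])
        rw [Equiv.swap_apply_of_ne_of_ne hm0 hm1]
        simp [hb, h]
        intro h'
        exact absurd (by omega : (m : ℕ) < 2) h
    have hkey : (a i0 + a i1) * N F ≤ 2 * N x := by
      have h1 : N (((a i0 + a i1 : ℝ) : ℂ) • F) = (a i0 + a i1) * N F := by
        rw [hN_smul, Complex.norm_real, Real.norm_eq_abs, abs_of_nonneg (by linarith [ha i0, ha i1])]
      have h2 : N (b + b ∘ (Equiv.swap i0 i1)) ≤ N b + N (b ∘ (Equiv.swap i0 i1)) :=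
        hN_triangle _ _
      rw [hN_perm (Equiv.swap i0 i1) b] at h2
      rw [hswap, h1] at h2
      linarith
    rw [hsd, hsd]
    rw [div_le_div_iff₀ (by norm_num) hNF]
    calc (a i0 + a i1) * N F ≤ 2 * N x := hkey
      _ = N x * 2 := by ring
  · -- upper bound
    rw [hsd]
    rw [div_le_iff₀ hNF]
    rw [hNx, ← hsum]
    exact PiNormAux.keyUpper N hd hN_triangle hN_smul hN_perm hN_unimod F hF hNF.le
      a ha (a i0) hmax
end

section
/- Let X be a d × d complex matrix and suppose y₀ ∈ ℂ minimizes the function y ↦ ‖X − y·I‖ over ℂ, where ‖·‖ is the operator norm. Then y₀ lies in the numerical range W(X) = {⟨ψ, X*ψ⟩ : ψ ∈ ℂ^d, ‖ψ‖ = 1} (Stampfli). -/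
open Matrix BigOperators

open scoped Classical in
/-- The largest eigenvalue of a (Hermitian) matrix. -/
noncomputable def lamMax {d : ℕ} (M : Matrix (Fin d) (Fin d) ℂ) : ℝ :=
  if h : M.IsHermitian then ⨆ i, h.eigenvalues i else 0

/-- The operator norm of a matrix: `‖A‖ = sqrt(λ_max(Aᴴ A))`. -/
noncomputable def opNorm {d : ℕ} (A : Matrix (Fin d) (Fin d) ℂ) : ℝ :=
  Real.sqrt (lamMax (Aᴴ * A))

lemma dot_self_eq {d : ℕ} (v : Fin d → ℂ) :
    star v ⬝ᵥ v = ((∑ i, Complex.normSq (v i) : ℝ) : ℂ) := by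
  simp [dotProduct, Complex.normSq_eq_conj_mul_self]

lemma gram_dot {d : ℕ} (A : Matrix (Fin d) (Fin d) ℂ) (ψ : Fin d → ℂ) :
    star ψ ⬝ᵥ (Aᴴ * A) *ᵥ ψ = ((∑ i, Complex.normSq ((A *ᵥ ψ) i) : ℝ) : ℂ) := by
  rw [← mulVec_mulVec, dotProduct_mulVec, ← star_mulVec, dot_self_eq]

lemma lamMax_eq {d : ℕ} {M : Matrix (Fin d) (Fin d) ℂ} (hM : M.IsHermitian) :
    lamMax M = ⨆ i, hM.eigenvalues i := by
  rw [lamMax, dif_pos hM]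

lemma rayleigh_le {d : ℕ} {M : Matrix (Fin d) (Fin d) ℂ} (hM : M.IsHermitian)
    (ψ : Fin d → ℂ) (hψ : ∑ i, Complex.normSq (ψ i) = 1) :
    (star ψ ⬝ᵥ M *ᵥ ψ).re ≤ lamMax M := by
  have hne : Nonempty (Fin d) := by
    rcases isEmpty_or_nonempty (Fin d) with h | h
    · simp [Finset.univ_eq_empty] at hψ
    · exact h
  set U : Matrix (Fin d) (Fin d) ℂ := (hM.eigenvectorUnitary : Matrix (Fin d) (Fin d) ℂ) with hU
  have hUU : U * star U = 1 := mem_unitaryGroup_iff.mp hM.eigenvectorUnitary.2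
  set φ : Fin d → ℂ := star U *ᵥ ψ with hφ
  have hφstar : star φ = star ψ ᵥ* U := by
    rw [hφ, star_mulVec, star_eq_conjTranspose, conjTranspose_conjTranspose]
  have key1 : star ψ ⬝ᵥ M *ᵥ ψ = ∑ i, (hM.eigenvalues i : ℂ) * Complex.normSq (φ i) := by
    conv_lhs => rw [hM.spectral_theorem, Unitary.conjStarAlgAut_apply]
    rw [← mulVec_mulVec, ← mulVec_mulVec, dotProduct_mulVec, ← hφstar]
    simp only [dotProduct, mulVec_diagonal, Function.comp_apply, Pi.star_apply,
      Complex.normSq_eq_conj_mul_self]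
    refine Finset.sum_congr rfl fun i _ => ?_
    simp only [Complex.star_def, ← hφ]
    exact mul_left_comm ((starRingEnd ℂ) (φ i)) ((hM.eigenvalues i : ℂ)) (φ i)
  have key2 : ∑ i, Complex.normSq (φ i) = 1 := by
    have h2 : star φ ⬝ᵥ φ = star ψ ⬝ᵥ ψ := by
      rw [hφstar, hφ, ← dotProduct_mulVec, mulVec_mulVec, hUU, one_mulVec]
    rw [dot_self_eq, dot_self_eq, hψ] at h2
    exact_mod_cast h2
  have hbdd : BddAbove (Set.range hM.eigenvalues) := Set.finite_range _ |>.bddAbove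
  rw [key1, lamMax_eq hM]
  have : (∑ i, (hM.eigenvalues i : ℂ) * (Complex.normSq (φ i) : ℂ)).re
      = ∑ i, hM.eigenvalues i * Complex.normSq (φ i) := by
    push_cast
    rw [Complex.re_sum]
    simp
  rw [this]
  calc ∑ i, hM.eigenvalues i * Complex.normSq (φ i)
      ≤ ∑ i, (⨆ j, hM.eigenvalues j) * Complex.normSq (φ i) :=
        Finset.sum_le_sum fun i _ => mul_le_mul_of_nonneg_right (le_ciSup hbdd i)
          (Complex.normSq_nonneg _)
    _ = ⨆ j, hM.eigenvalues j := by rw [← Finset.mul_sum, key2, mul_one]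

lemma exists_top_eigvec {d : ℕ} (hd : 1 ≤ d) {M : Matrix (Fin d) (Fin d) ℂ}
    (hM : M.IsHermitian) :
    ∃ v : Fin d → ℂ, (∑ i, Complex.normSq (v i) = 1) ∧
      star v ⬝ᵥ M *ᵥ v = ((lamMax M : ℝ) : ℂ) := by
  have hne : Nonempty (Fin d) := ⟨⟨0, hd⟩⟩
  obtain ⟨i₀, hi₀⟩ := Finite.exists_max hM.eigenvalues
  have hsup : (⨆ i, hM.eigenvalues i) = hM.eigenvalues i₀ :=
    le_antisymm (ciSup_le hi₀) (le_ciSup (Set.finite_range _ |>.bddAbove) i₀)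
  set v : Fin d → ℂ := (WithLp.equiv 2 _) (hM.eigenvectorBasis i₀) with hv
  have hunit : ∑ i, Complex.normSq (v i) = 1 := by
    have h1 : star v ⬝ᵥ v = 1 := by
      have := EuclideanSpace.inner_eq_star_dotProduct (hM.eigenvectorBasis i₀)
        (hM.eigenvectorBasis i₀)
      rw [dotProduct_comm]
      change (hM.eigenvectorBasis i₀).ofLp ⬝ᵥ star (hM.eigenvectorBasis i₀).ofLp = 1
      rw [← this, inner_self_eq_norm_sq_to_K, hM.eigenvectorBasis.orthonormal.1 i₀]
      norm_num
    rw [dot_self_eq] at h1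
    exact_mod_cast h1
  refine ⟨v, hunit, ?_⟩
  rw [show M *ᵥ v = hM.eigenvalues i₀ • v from hM.mulVec_eigenvectorBasis i₀]
  have : star v ⬝ᵥ (hM.eigenvalues i₀ • v) = (hM.eigenvalues i₀ : ℂ) * (star v ⬝ᵥ v) := by
    rw [dotProduct_smul]
    simp [Complex.real_smul]
  rw [this, dot_self_eq, hunit, lamMax_eq hM, hsup]
  norm_num

lemma quad_expand {d : ℕ} (Z : Matrix (Fin d) (Fin d) ℂ) (a b : ℂ) (x y : Fin d → ℂ) :
    star (a • x + b • y) ⬝ᵥ Z *ᵥ (a • x + b • y)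
      = (starRingEnd ℂ) a * a * (star x ⬝ᵥ Z *ᵥ x) + (starRingEnd ℂ) a * b * (star x ⬝ᵥ Z *ᵥ y)
        + (starRingEnd ℂ) b * a * (star y ⬝ᵥ Z *ᵥ x)
        + (starRingEnd ℂ) b * b * (star y ⬝ᵥ Z *ᵥ y) := by
  simp only [star_add, star_smul, mulVec_add, mulVec_smul, add_dotProduct, dotProduct_add,
    smul_dotProduct, dotProduct_smul, smul_eq_mul, RCLike.star_def]
  ring

lemma smul_quad {d : ℕ} (Z : Matrix (Fin d) (Fin d) ℂ) (c : ℂ) (x : Fin d → ℂ) :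
    star (c • x) ⬝ᵥ Z *ᵥ (c • x) = (starRingEnd ℂ) c * c * (star x ⬝ᵥ Z *ᵥ x) := by
  simp only [star_smul, mulVec_smul, smul_dotProduct, dotProduct_smul, smul_eq_mul,
    RCLike.star_def]
  ring

lemma segment_mem {d : ℕ} (Z : Matrix (Fin d) (Fin d) ℂ) (u v : Fin d → ℂ)
    (hu : ∑ i, Complex.normSq (u i) = 1) (hv : ∑ i, Complex.normSq (v i) = 1)
    (hu0 : star u ⬝ᵥ Z *ᵥ u = 0) (hv1 : star v ⬝ᵥ Z *ᵥ v = 1)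
    (t : ℝ) (ht : t ∈ Set.Icc (0:ℝ) 1) :
    ∃ w : Fin d → ℂ, (∑ i, Complex.normSq (w i) = 1) ∧ star w ⬝ᵥ Z *ᵥ w = (t : ℂ) := by
  classical
  set p := star u ⬝ᵥ Z *ᵥ v with hp
  set q := star v ⬝ᵥ Z *ᵥ u with hq
  -- phase adjustment
  set g : ℝ → ℝ := fun θ => (Complex.exp (-(θ:ℂ) * Complex.I) * p
    + Complex.exp ((θ:ℂ) * Complex.I) * q).im with hgdef
  have hg : Continuous g := by fun_prop
  have hg0 : g 0 = (p + q).im := by simp [hgdef]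
  have hgπ : g Real.pi = -(p + q).im := by
    have h1 : Complex.exp (-((Real.pi:ℂ) * Complex.I)) = -1 := by
      rw [Complex.exp_neg, Complex.exp_pi_mul_I]
      norm_num
    simp only [hgdef, neg_mul, h1, Complex.exp_pi_mul_I]
    simp [Complex.add_im, Complex.neg_im]
    ring
  have hmem : (0:ℝ) ∈ Set.uIcc (g 0) (g Real.pi) := by
    rw [hg0, hgπ]
    rcases le_total 0 ((p+q).im) with h | h
    · exact Set.mem_uIcc.2 (Or.inr ⟨by linarith, by linarith⟩)
    · exact Set.mem_uIcc.2 (Or.inl ⟨by linarith, by linarith⟩)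
  obtain ⟨θ, -, hθ⟩ := intermediate_value_uIcc hg.continuousOn hmem
  set e : ℂ := Complex.exp ((θ:ℂ) * Complex.I) with he
  have hce : (starRingEnd ℂ) e = Complex.exp (-(θ:ℂ) * Complex.I) := by
    rw [he, ← Complex.exp_conj]
    congr 1
    simp [Complex.conj_I, Complex.conj_ofReal]
  have hnse : Complex.normSq e = 1 := by
    rw [Complex.normSq_eq_norm_sq, he, Complex.norm_exp_ofReal_mul_I]
    norm_num
  have hcee : (starRingEnd ℂ) e * e = 1 := by
    rw [← Complex.normSq_eq_conj_mul_self] at *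
    exact_mod_cast congrArg (Complex.ofReal) hnse
  set u' : Fin d → ℂ := e • u with hu'
  have hu'n : ∑ i, Complex.normSq (u' i) = 1 := by
    simp only [hu', Pi.smul_apply, smul_eq_mul, Complex.normSq_mul, hnse, one_mul]
    exact hu
  have hu'0 : star u' ⬝ᵥ Z *ᵥ u' = 0 := by
    rw [hu', smul_quad, hu0, mul_zero]
  set P := star u' ⬝ᵥ Z *ᵥ v + star v ⬝ᵥ Z *ᵥ u' with hP
  have hPim : P.im = 0 := by
    have h1 : star u' ⬝ᵥ Z *ᵥ v = (starRingEnd ℂ) e * p := by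
      rw [hu', hp]
      simp only [star_smul, smul_dotProduct, smul_eq_mul, RCLike.star_def]
    have h2 : star v ⬝ᵥ Z *ᵥ u' = e * q := by
      rw [hu', hq]
      simp only [mulVec_smul, dotProduct_smul, smul_eq_mul]
    rw [hP, h1, h2, hce]
    exact hθ
  set Q := star u' ⬝ᵥ v + star v ⬝ᵥ u' with hQ
  set w : ℝ → (Fin d → ℂ) := fun s => ((1-s : ℝ) : ℂ) • u' + ((s:ℝ):ℂ) • v with hw
  have hdotu' : star u' ⬝ᵥ u' = 1 := by
    rw [dot_self_eq, hu'n]; norm_num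
  have hdotv : star v ⬝ᵥ v = 1 := by
    rw [dot_self_eq, hv]; norm_num
  have hF : ∀ s : ℝ, star (w s) ⬝ᵥ Z *ᵥ (w s)
      = (((s:ℝ)^2 : ℝ) : ℂ) + (((1-s)*s : ℝ) : ℂ) * P := by
    intro s
    rw [hw]
    simp only []
    rw [quad_expand, hu'0, hv1, hP]
    simp only [Complex.conj_ofReal]
    push_cast
    ring
  have hFim : ∀ s : ℝ, (star (w s) ⬝ᵥ Z *ᵥ (w s)).im = 0 := by
    intro s
    rw [hF s]
    simp only [Complex.add_im, Complex.ofReal_im, Complex.im_ofReal_mul, hPim, mul_zero, zero_add]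
  have hFre : ∀ s : ℝ, (star (w s) ⬝ᵥ Z *ᵥ (w s)).re = s^2 + (1-s)*s*P.re := by
    intro s
    rw [hF s]
    simp only [Complex.add_re, Complex.ofReal_re, Complex.re_ofReal_mul]
  set n : ℝ → ℝ := fun s => (1-s)^2 + s^2 + (1-s)*s*Q.re with hn
  have hNs : ∀ s : ℝ, ∑ i, Complex.normSq (w s i) = n s := by
    intro s
    have h1 : star (w s) ⬝ᵥ (w s) = ((((1-s)^2 + s^2 : ℝ)) : ℂ) + (((1-s)*s : ℝ):ℂ) * Q := by
      have := quad_expand (1 : Matrix (Fin d) (Fin d) ℂ) ((1-s : ℝ):ℂ) ((s:ℝ):ℂ) u' v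
      simp only [one_mulVec] at this
      rw [hw]
      simp only []
      rw [this, hdotu', hdotv, hQ]
      simp only [Complex.conj_ofReal]
      push_cast
      ring
    have h2 : ((∑ i, Complex.normSq (w s i) : ℝ) : ℂ)
        = ((((1-s)^2 + s^2 : ℝ)) : ℂ) + (((1-s)*s : ℝ):ℂ) * Q := by
      rw [← dot_self_eq, h1]
    have h3 := congrArg Complex.re h2
    simp only [Complex.add_re, Complex.ofReal_re, Complex.re_ofReal_mul] at h3
    rw [hn]
    exact h3
  have hpos : ∀ s ∈ Set.Icc (0:ℝ) 1, 0 < n s := by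
    intro s hs
    rw [← hNs s]
    have hnn : 0 ≤ ∑ i, Complex.normSq (w s i) :=
      Finset.sum_nonneg fun i _ => Complex.normSq_nonneg _
    rcases hnn.lt_or_eq with h | h
    · exact h
    · exfalso
      have hz : w s = 0 := by
        funext i
        have : ∀ j ∈ Finset.univ, Complex.normSq (w s j) = 0 := by
          rw [← Finset.sum_eq_zero_iff_of_nonneg (fun j _ => Complex.normSq_nonneg _)]
          exact h.symm
        exact Complex.normSq_eq_zero.1 (this i (Finset.mem_univ i))
      have heq : ((1-s : ℝ):ℂ) • u' = -(((s:ℝ):ℂ) • v) := by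
        have := hz
        rw [hw] at this
        simp only [] at this
        exact eq_neg_of_add_eq_zero_left this
      have hA : star (((1-s : ℝ):ℂ) • u') ⬝ᵥ Z *ᵥ (((1-s : ℝ):ℂ) • u') = 0 := by
        rw [smul_quad, hu'0, mul_zero]
      have hB : star (-(((s:ℝ):ℂ) • v)) ⬝ᵥ Z *ᵥ (-(((s:ℝ):ℂ) • v)) = ((s^2 : ℝ) : ℂ) := by
        have : -(((s:ℝ):ℂ) • v) = ((-s : ℝ):ℂ) • v := by push_cast; rw [neg_smul]
        rw [this, smul_quad, hv1, mul_one]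
        simp [Complex.conj_ofReal]
        push_cast
        ring
      rw [heq, hB] at hA
      have hs0 : s = 0 := by
        have : (s:ℝ)^2 = 0 := by exact_mod_cast hA
        nlinarith
      rw [hs0] at heq
      simp at heq
      rw [heq] at hu'n
      simp at hu'n
  set G : ℝ → ℝ := fun s => (s^2 + (1-s)*s*P.re) / n s with hG
  have hGcont : ContinuousOn G (Set.Icc 0 1) := by
    apply ContinuousOn.div
    · fun_prop
    · fun_prop
    · exact fun s hs => (hpos s hs).ne'
  have hG0 : G 0 = 0 := by simp [hG, hn]
  have hG1 : G 1 = 1 := by norm_num [hG, hn]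
  have htmem : t ∈ Set.Icc (G 0) (G 1) := by rw [hG0, hG1]; exact ht
  obtain ⟨s₀, hs₀, hGs₀⟩ := intermediate_value_Icc (by norm_num : (0:ℝ) ≤ 1) hGcont htmem
  have hr := hpos s₀ hs₀
  set r := n s₀ with hr'
  set c : ℝ := (Real.sqrt r)⁻¹ with hc
  refine ⟨(c:ℂ) • w s₀, ?_, ?_⟩
  · simp only [Pi.smul_apply, smul_eq_mul, Complex.normSq_mul, Complex.normSq_ofReal]
    rw [← Finset.mul_sum, hNs s₀, hc]
    rw [← Real.sqrt_inv]
    rw [Real.mul_self_sqrt (by positivity)]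
    field_simp
    exact hr'.symm
  · have hFval : star (w s₀) ⬝ᵥ Z *ᵥ (w s₀) = ((t * r : ℝ) : ℂ) := by
      apply Complex.ext
      · rw [hFre s₀]
        have : (s₀^2 + (1-s₀)*s₀*P.re) = G s₀ * n s₀ := by
          rw [hG]
          field_simp
          exact (mul_div_cancel_right₀ _ hr.ne').symm
        rw [this, hGs₀]
        simp
        exact Or.inl hr'.symm
      · rw [hFim s₀]
        simp
    rw [smul_quad, hFval]
    simp only [Complex.conj_ofReal]
    have hcast : (c:ℂ) * (c:ℂ) * ((t*r:ℝ):ℂ) = (((c*c*(t*r)):ℝ):ℂ) := by push_cast; ring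
    rw [hcast]
    have hss : Real.sqrt r * Real.sqrt r = r := Real.mul_self_sqrt hr.le
    have hreal : c*c*(t*r) = t := by
      rw [hc]
      rw [← hss]
      have hsne : Real.sqrt r ≠ 0 := ne_of_gt (Real.sqrt_pos.2 hr)
      field_simp
      rw [Real.sqrt_sq (Real.sqrt_nonneg r)]
    exact Complex.ofReal_inj.2 hreal

lemma dot_conj {d : ℕ} (x y : Fin d → ℂ) :
    star x ⬝ᵥ y = (starRingEnd ℂ) (star y ⬝ᵥ x) := by
  simp only [dotProduct, map_sum]
  refine Finset.sum_congr rfl fun i _ => ?_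
  simp only [Pi.star_apply, Complex.star_def]
  rw [_root_.map_mul, Complex.conj_conj]
  exact mul_comm _ _

lemma numRange_convex {d : ℕ} (Y : Matrix (Fin d) (Fin d) ℂ) :
    Convex ℝ {z : ℂ | ∃ ψ : Fin d → ℂ, (∑ i, Complex.normSq (ψ i) = 1)
      ∧ star ψ ⬝ᵥ Y *ᵥ ψ = z} := by
  rintro z0 ⟨ψ0, hψ0, hz0⟩ z1 ⟨ψ1, hψ1, hz1⟩ a b ha hb hab
  by_cases hzz : z0 = z1
  · refine ⟨ψ0, hψ0, ?_⟩
    rw [hz0]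
    have h : a • z0 + b • z1 = z0 := by rw [← hzz, ← add_smul, hab, one_smul]
    exact h.symm
  · have hsub : z1 - z0 ≠ 0 := sub_ne_zero.2 (Ne.symm hzz)
    set c : ℂ := (z1 - z0)⁻¹ with hc
    set Z : Matrix (Fin d) (Fin d) ℂ := c • (Y - z0 • (1 : Matrix (Fin d) (Fin d) ℂ)) with hZ
    have hval : ∀ ψ : Fin d → ℂ, (∑ i, Complex.normSq (ψ i) = 1) →
        star ψ ⬝ᵥ Z *ᵥ ψ = c * (star ψ ⬝ᵥ Y *ᵥ ψ - z0) := by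
      intro ψ hψ
      rw [hZ, smul_mulVec, dotProduct_smul, smul_eq_mul, sub_mulVec,
        smul_mulVec, one_mulVec, dotProduct_sub, dotProduct_smul, smul_eq_mul,
        dot_self_eq, hψ]
      norm_num
    have h0 : star ψ0 ⬝ᵥ Z *ᵥ ψ0 = 0 := by
      rw [hval ψ0 hψ0, hz0, sub_self, mul_zero]
    have h1 : star ψ1 ⬝ᵥ Z *ᵥ ψ1 = 1 := by
      rw [hval ψ1 hψ1, hz1, hc, inv_mul_cancel₀ hsub]
    have hb1 : b ≤ 1 := by linarith
    obtain ⟨w, hwn, hwv⟩ := segment_mem Z ψ0 ψ1 hψ0 hψ1 h0 h1 b ⟨hb, hb1⟩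
    refine ⟨w, hwn, ?_⟩
    have hYw : star w ⬝ᵥ Y *ᵥ w = z0 + (b:ℂ) * (z1 - z0) := by
      have := hval w hwn
      rw [hwv] at this
      have h2 : star w ⬝ᵥ Y *ᵥ w - z0 = (b:ℂ) * (z1 - z0) := by
        field_simp [hc] at this
        rw [this, mul_comm c, mul_assoc, hc, inv_mul_cancel₀ hsub, mul_one]
      linear_combination h2
    rw [hYw]
    have hab' : (a:ℝ) = 1 - b := by linarith
    simp only [Complex.real_smul, hab']
    push_cast
    ring

lemma numRange_isClosed {d : ℕ} (Y : Matrix (Fin d) (Fin d) ℂ) :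
    IsClosed {z : ℂ | ∃ ψ : Fin d → ℂ, (∑ i, Complex.normSq (ψ i) = 1)
      ∧ star ψ ⬝ᵥ Y *ᵥ ψ = z} := by
  have hset : {z : ℂ | ∃ ψ : Fin d → ℂ, (∑ i, Complex.normSq (ψ i) = 1)
      ∧ star ψ ⬝ᵥ Y *ᵥ ψ = z}
      = (fun ψ : Fin d → ℂ => star ψ ⬝ᵥ Y *ᵥ ψ) ''
        {ψ : Fin d → ℂ | ∑ i, Complex.normSq (ψ i) = 1} := by
    ext z
    exact ⟨fun ⟨ψ, h1, h2⟩ => ⟨ψ, h1, h2⟩, fun ⟨ψ, h1, h2⟩ => ⟨ψ, h1, h2⟩⟩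
  rw [hset]
  have hn : Continuous (fun ψ : Fin d → ℂ => ∑ i, Complex.normSq (ψ i)) :=
    continuous_finset_sum _ fun i _ => Complex.continuous_normSq.comp (continuous_apply i)
  have hfc : Continuous (fun ψ : Fin d → ℂ => star ψ ⬝ᵥ Y *ᵥ ψ) := by
    have : (fun ψ : Fin d → ℂ => star ψ ⬝ᵥ Y *ᵥ ψ)
        = fun ψ => ∑ i, (starRingEnd ℂ) (ψ i) * ∑ j, Y i j * ψ j := by
      funext ψ
      simp [dotProduct, mulVec, Complex.star_def]
    rw [this]
    exact continuous_finset_sum _ fun i _ =>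
      ((Complex.continuous_conj.comp (continuous_apply i)).mul
        (continuous_finset_sum _ fun j _ => continuous_const.mul (continuous_apply j)))
  have hcompact : IsCompact {ψ : Fin d → ℂ | ∑ i, Complex.normSq (ψ i) = 1} := by
    apply Metric.isCompact_of_isClosed_isBounded
    · exact isClosed_singleton.preimage hn
    · rw [Metric.isBounded_iff_subset_closedBall 0]
      refine ⟨1, fun ψ hψ => ?_⟩
      simp only [Set.mem_setOf_eq] at hψ
      simp only [Metric.mem_closedBall, dist_zero_right]
      rw [pi_norm_le_iff_of_nonneg zero_le_one]
      intro i
      have h1 : Complex.normSq (ψ i) ≤ 1 := by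
        rw [← hψ]
        exact Finset.single_le_sum (fun j _ => Complex.normSq_nonneg _) (Finset.mem_univ i)
      have h2 : ‖ψ i‖ ^ 2 ≤ 1 := by
        rw [← Complex.sq_norm] at h1
        exact h1
      nlinarith [norm_nonneg (ψ i)]
  exact (hcompact.image hfc).isClosed

lemma exists_sep {S : Set ℂ} (hconv : Convex ℝ S) (hcl : IsClosed S) (h0 : (0:ℂ) ∉ S) :
    ∃ (cc : ℂ) (δ : ℝ), 0 < δ ∧ ∀ z ∈ S, δ ≤ (cc * z).re := by
  obtain ⟨f, uu, hfu, hsep⟩ := geometric_hahn_banach_point_closed hconv hcl h0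
  have huu : 0 < uu := by simpa using hfu
  set cc : ℂ := (f 1 : ℂ) - (f Complex.I : ℂ) * Complex.I with hcc
  have hrep : ∀ z : ℂ, (cc * z).re = f z := by
    intro z
    have hz : z = z.re • (1:ℂ) + z.im • Complex.I := by
      simp only [Complex.real_smul, mul_one]
      exact (Complex.re_add_im z).symm
    have hfz : f z = z.re * f 1 + z.im * f Complex.I := by
      conv_lhs => rw [hz]
      rw [_root_.map_add, f.map_smul, f.map_smul]
      simp [smul_eq_mul]
    rw [hfz, hcc]
    simp [Complex.mul_re, Complex.sub_re, Complex.sub_im, Complex.mul_im]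
    ring
  exact ⟨cc, uu, huu, fun z hz => le_of_lt (by rw [hrep z]; exact hsep z hz)⟩

lemma shift_normSq {d : ℕ} (Y : Matrix (Fin d) (Fin d) ℂ) (w : ℂ) (ψ : Fin d → ℂ)
    (hψ : ∑ i, Complex.normSq (ψ i) = 1) :
    ∑ i, Complex.normSq (((Y - w • (1 : Matrix (Fin d) (Fin d) ℂ)) *ᵥ ψ) i)
      = ∑ i, Complex.normSq ((Y *ᵥ ψ) i)
        - 2 * ((starRingEnd ℂ) w * (star ψ ⬝ᵥ Y *ᵥ ψ)).re + Complex.normSq w := by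
  set a : Fin d → ℂ := Y *ᵥ ψ with ha
  have hmv : (Y - w • (1 : Matrix (Fin d) (Fin d) ℂ)) *ᵥ ψ = a - w • ψ := by
    rw [sub_mulVec, smul_mulVec, one_mulVec]
  set zz : ℂ := star ψ ⬝ᵥ a with hzz
  have hexp : star (a - w • ψ) ⬝ᵥ (a - w • ψ)
      = star a ⬝ᵥ a - (w * (star a ⬝ᵥ ψ) + (starRingEnd ℂ) w * zz)
        + (starRingEnd ℂ) w * w * (star ψ ⬝ᵥ ψ) := by
    simp only [star_sub, star_smul, sub_dotProduct, dotProduct_sub, smul_dotProduct,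
      dotProduct_smul, smul_eq_mul, RCLike.star_def, hzz]
    ring
  have h1 : w * (star a ⬝ᵥ ψ) + (starRingEnd ℂ) w * zz
      = ((2 * ((starRingEnd ℂ) w * zz).re : ℝ) : ℂ) := by
    rw [dot_conj a ψ, ← hzz]
    have h2 : w * (starRingEnd ℂ) zz = (starRingEnd ℂ) ((starRingEnd ℂ) w * zz) := by
      rw [_root_.map_mul, Complex.conj_conj]
    rw [h2, add_comm, ← Complex.add_conj]
  have h3 : (starRingEnd ℂ) w * w * (star ψ ⬝ᵥ ψ) = ((Complex.normSq w : ℝ) : ℂ) := by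
    rw [dot_self_eq, hψ, Complex.normSq_eq_conj_mul_self]
    norm_num
  have key : ((∑ i, Complex.normSq ((a - w • ψ) i) : ℝ) : ℂ)
      = ((∑ i, Complex.normSq (a i) - 2 * ((starRingEnd ℂ) w * zz).re
          + Complex.normSq w : ℝ) : ℂ) := by
    rw [← dot_self_eq, hexp, h1, h3, dot_self_eq a]
    push_cast
    ring
  rw [hmv, hzz] at *
  exact_mod_cast key


/-- **Stampfli.** A minimizer `y₀` of `y ↦ ‖X - yI‖` (operator norm) lies in the
numerical range `W(X) = {⟨ψ, Xψ⟩ : ‖ψ‖ = 1}` of `X`. -/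
theorem minimizer_mem_numericalRange (d : ℕ) (hd : 1 ≤ d)
    (X : Matrix (Fin d) (Fin d) ℂ) (y₀ : ℂ)
    (hmin : ∀ y : ℂ, opNorm (X - y₀ • 1) ≤ opNorm (X - y • 1)) :
    ∃ ψ : Fin d → ℂ, (∑ i, ‖ψ i‖ ^ 2 = 1) ∧
      dotProduct (star ψ) (X.mulVec ψ) = y₀ := by
  classical
  by_contra hcon
  push_neg at hcon
  set Y : Matrix (Fin d) (Fin d) ℂ := X - y₀ • 1 with hY
  have hfY : ∀ ψ : Fin d → ℂ, (∑ i, Complex.normSq (ψ i) = 1) →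
      star ψ ⬝ᵥ Y *ᵥ ψ = star ψ ⬝ᵥ X *ᵥ ψ - y₀ := by
    intro ψ hψ
    rw [hY, sub_mulVec, smul_mulVec, one_mulVec, dotProduct_sub, dotProduct_smul,
      smul_eq_mul, dot_self_eq, hψ]
    norm_num
  set S : Set ℂ := {z : ℂ | ∃ ψ : Fin d → ℂ, (∑ i, Complex.normSq (ψ i) = 1)
    ∧ star ψ ⬝ᵥ Y *ᵥ ψ = z} with hS
  have h0S : (0:ℂ) ∉ S := by
    rintro ⟨ψ, hψ, hval⟩
    refine hcon ψ ?_ ?_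
    · simp only [Complex.sq_norm]
      exact hψ
    · rw [hfY ψ hψ] at hval
      exact sub_eq_zero.mp hval
  obtain ⟨cc, δ, hδ, hsep⟩ := exists_sep (numRange_convex Y) (numRange_isClosed Y) h0S
  set ε : ℝ := δ / (Complex.normSq cc + 1) with hε
  have hncnn : 0 ≤ Complex.normSq cc := Complex.normSq_nonneg cc
  have hεpos : 0 < ε := div_pos hδ (by positivity)
  have hεeq : ε * (Complex.normSq cc + 1) = δ := by
    rw [hε]
    field_simp
  set w : ℂ := (ε:ℂ) * (starRingEnd ℂ) cc with hw
  have hconjw : (starRingEnd ℂ) w = (ε:ℂ) * cc := by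
    rw [hw, _root_.map_mul, Complex.conj_conj, Complex.conj_ofReal]
  have hnsw : Complex.normSq w = ε^2 * Complex.normSq cc := by
    rw [hw, Complex.normSq_mul, Complex.normSq_ofReal, Complex.normSq_conj]
    ring
  set m : ℝ := lamMax (Yᴴ * Y) with hm
  set A : Matrix (Fin d) (Fin d) ℂ := Y - w • 1 with hA
  have hbound : ∀ ψ : Fin d → ℂ, (∑ i, Complex.normSq (ψ i) = 1) →
      ∑ i, Complex.normSq ((A *ᵥ ψ) i) ≤ m - ε * δ := by
    intro ψ hψ
    rw [hA, shift_normSq Y w ψ hψ]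
    have hqY : ∑ i, Complex.normSq ((Y *ᵥ ψ) i) ≤ m := by
      have h := rayleigh_le (isHermitian_conjTranspose_mul_self Y) ψ hψ
      rw [gram_dot] at h
      simpa using h
    have hsepψ : δ ≤ (cc * (star ψ ⬝ᵥ Y *ᵥ ψ)).re := hsep _ ⟨ψ, hψ, rfl⟩
    have hcross : ((starRingEnd ℂ) w * (star ψ ⬝ᵥ Y *ᵥ ψ)).re
        = ε * (cc * (star ψ ⬝ᵥ Y *ᵥ ψ)).re := by
      rw [hconjw, mul_assoc, Complex.re_ofReal_mul]
    rw [hcross, hnsw]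
    nlinarith [mul_le_mul_of_nonneg_left hsepψ hεpos.le, hεpos, hεeq, hqY]
  obtain ⟨v, hv1, hv2⟩ := exists_top_eigvec hd (isHermitian_conjTranspose_mul_self A)
  have hlam2 : lamMax (Aᴴ * A) = ∑ i, Complex.normSq ((A *ᵥ v) i) := by
    have h := gram_dot A v
    rw [hv2] at h
    exact_mod_cast h
  have hlamle : lamMax (Aᴴ * A) ≤ m - ε * δ := by
    rw [hlam2]
    exact hbound v hv1
  have hXA : X - (y₀ + w) • (1 : Matrix (Fin d) (Fin d) ℂ) = A := by
    rw [hA, hY, add_smul, ← sub_sub]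
  have hAopt := hmin (y₀ + w)
  rw [hXA] at hAopt
  have hm0 : 0 ≤ m := by
    obtain ⟨v0, hv01, hv02⟩ := exists_top_eigvec hd (isHermitian_conjTranspose_mul_self Y)
    have h := gram_dot Y v0
    rw [hv02] at h
    have h2 : m = ∑ i, Complex.normSq ((Y *ᵥ v0) i) := by exact_mod_cast h
    rw [h2]
    exact Finset.sum_nonneg fun i _ => Complex.normSq_nonneg _
  have hA0 : 0 ≤ lamMax (Aᴴ * A) := by
    rw [hlam2]
    exact Finset.sum_nonneg fun i _ => Complex.normSq_nonneg _
  have hmle : m ≤ lamMax (Aᴴ * A) := by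
    have h : Real.sqrt m ≤ Real.sqrt (lamMax (Aᴴ * A)) := hAopt
    calc m = Real.sqrt m ^ 2 := (Real.sq_sqrt hm0).symm
      _ ≤ Real.sqrt (lamMax (Aᴴ * A)) ^ 2 := pow_le_pow_left₀ (Real.sqrt_nonneg _) h 2
      _ = lamMax (Aᴴ * A) := Real.sq_sqrt hA0
  nlinarith [hεpos, hδ]
end

section
/- Let A and B be Hermitian d × d complex matrices and let ρ be a d × d density matrix. Then sqrt( (Tr(ρ*A))² + (Tr(ρ*B))² ) ≤ Tr( ρ * (A² + B²)^(1/2) ), where (A² + B²)^(1/2) is the positive semidefinite square root of A² + B², and Tr(ρ*A), Tr(ρ*B) are real. -/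
open Matrix BigOperators
open scoped ComplexOrder

lemma psd_trace_nonneg' {d : ℕ} {M : Matrix (Fin d) (Fin d) ℂ} (hM : M.PosSemidef) :
    0 ≤ M.trace := by
  exact hM.trace_nonneg

lemma psd_trace_mul_nonneg' {d : ℕ} {ρ P : Matrix (Fin d) (Fin d) ℂ} (hρ : ρ.PosSemidef)
    (hP : P.PosSemidef) : 0 ≤ (ρ * P).trace := by
  obtain ⟨B, rfl⟩ := (by open scoped MatrixOrder in exact CStarAlgebra.nonneg_iff_eq_star_mul_self.mp hP.nonneg : ∃ B : Matrix (Fin d) (Fin d) ℂ, P = star B * B)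
  rw [← mul_assoc, Matrix.trace_mul_cycle]
  exact psd_trace_nonneg' (hρ.mul_mul_conjTranspose_same B)

lemma trace_mul_im_zero' {d : ℕ} {ρ M : Matrix (Fin d) (Fin d) ℂ} (hρ : ρ.IsHermitian)
    (hM : M.IsHermitian) : (ρ * M).trace.im = 0 := by
  have h : star (ρ * M).trace = (ρ * M).trace := by
    rw [← Matrix.trace_conjTranspose, Matrix.conjTranspose_mul, hρ.eq, hM.eq,
      Matrix.trace_mul_comm]
  exact Complex.conj_eq_iff_im.mp h

lemma psd_of_sq_le_sq' {d : ℕ} {M S : Matrix (Fin d) (Fin d) ℂ} (hM : M.IsHermitian)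
    (hS : S.PosSemidef) (h : (S * S - M * M).PosSemidef) : (S - M).PosSemidef := by
  have hT : (S - M).IsHermitian := hS.1.sub hM
  apply hT.posSemidef_iff_eigenvalues_nonneg.mpr
  intro i
  show (0:ℝ) ≤ hT.eigenvalues i
  set T := S - M with hTdef
  set lam : ℝ := hT.eigenvalues i with hlam
  set x : Fin d → ℂ := ⇑(hT.eigenvectorBasis i) with hxdef
  have hx : T *ᵥ x = (lam : ℂ) • x := hT.mulVec_eigenvectorBasis i
  have hx1 : star x ⬝ᵥ x = 1 := by
    have h2 := orthonormal_iff_ite.mp hT.eigenvectorBasis.orthonormal i i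
    simp only [if_pos rfl] at h2
    rw [EuclideanSpace.inner_eq_star_dotProduct] at h2
    rw [if_pos trivial, dotProduct_comm] at h2
    exact h2
  have hexp : S * S - M * M = S * T + T * S - T * T := by
    have : M = S - T := by rw [hTdef]; abel
    rw [this]; noncomm_ring
  have h1 : 0 ≤ star x ⬝ᵥ (S * S - M * M) *ᵥ x := h.dotProduct_mulVec_nonneg x
  rw [hexp] at h1
  have hvm : star x ᵥ* T = (lam : ℂ) • star x := by
    have := Matrix.star_mulVec (M := T) (v := x)
    rw [hT.eq] at this
    rw [← this, hx]
    simp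
  have e1 : star x ⬝ᵥ (S * T) *ᵥ x = (lam : ℂ) * (star x ⬝ᵥ S *ᵥ x) := by
    rw [← Matrix.mulVec_mulVec, hx, Matrix.mulVec_smul, dotProduct_smul]
    simp
  have e2 : star x ⬝ᵥ (T * S) *ᵥ x = (lam : ℂ) * (star x ⬝ᵥ S *ᵥ x) := by
    rw [← Matrix.mulVec_mulVec, Matrix.dotProduct_mulVec, hvm, smul_dotProduct,
      smul_eq_mul]
  have e3 : star x ⬝ᵥ (T * T) *ᵥ x = (lam : ℂ) ^ 2 := by
    rw [← Matrix.mulVec_mulVec, hx, Matrix.mulVec_smul, hx, dotProduct_smul,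
      dotProduct_smul, hx1]
    simp; ring
  rw [Matrix.sub_mulVec, Matrix.add_mulVec, dotProduct_sub, dotProduct_add,
    e1, e2, e3] at h1
  have hq := hS.dotProduct_mulVec_nonneg x
  set q : ℂ := star x ⬝ᵥ S *ᵥ x with hqdef
  have hqre : 0 ≤ q.re := (Complex.le_def.mp hq).1
  have h1re : 0 ≤ ((lam : ℂ) * q + (lam : ℂ) * q - (lam : ℂ) ^ 2).re := by
    simpa using (Complex.le_def.mp h1).1
  have hqim : q.im = 0 := (Complex.le_def.mp hq).2.symm
  simp only [Complex.sub_re, Complex.add_re, Complex.mul_re, Complex.ofReal_re,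
    Complex.ofReal_im, hqim, ← Complex.ofReal_pow] at h1re
  nlinarith [sq_nonneg lam]

/-- For Hermitian `A` and `B`, the matrix `A² + B²` is positive semidefinite. -/
theorem sq_add_sq_posSemidef {d : ℕ} {A B : Matrix (Fin d) (Fin d) ℂ}
    (hA : A.IsHermitian) (hB : B.IsHermitian) : (A * A + B * B).PosSemidef := by
  have h1 := Matrix.posSemidef_conjTranspose_mul_self A
  have h2 := Matrix.posSemidef_conjTranspose_mul_self B
  rw [hA.eq] at h1
  rw [hB.eq] at h2
  exact h1.add h2

noncomputable def Matrix.PosSemidef.sqrt {n : Type*} [Fintype n] [DecidableEq n]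
    {M : Matrix n n ℂ} (hM : M.PosSemidef) : Matrix n n ℂ :=
  hM.1.eigenvectorUnitary.1 * diagonal ((↑) ∘ (√·) ∘ hM.1.eigenvalues) *
    (star hM.1.eigenvectorUnitary : Matrix n n ℂ)

lemma Matrix.PosSemidef.posSemidef_sqrt {n : Type*} [Fintype n] [DecidableEq n]
    {M : Matrix n n ℂ} (hM : M.PosSemidef) : hM.sqrt.PosSemidef := by
  unfold Matrix.PosSemidef.sqrt
  rw [Unitary.isUnit_coe.posSemidef_star_right_conjugate_iff, posSemidef_diagonal_iff]
  intro i
  simp [Real.sqrt_nonneg]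

lemma Matrix.PosSemidef.sqrt_mul_self {n : Type*} [Fintype n] [DecidableEq n]
    {M : Matrix n n ℂ} (hM : M.PosSemidef) : hM.sqrt * hM.sqrt = M := by
  unfold Matrix.PosSemidef.sqrt
  conv_rhs => rw [hM.1.spectral_theorem, Unitary.conjStarAlgAut_apply]
  have hU : (star hM.1.eigenvectorUnitary : Matrix n n ℂ) * hM.1.eigenvectorUnitary.1 = 1 :=
    Unitary.coe_star_mul_self _
  rw [show ∀ X Y Z W V : Matrix n n ℂ, X * Y * Z * (W * Y * V) = X * Y * (Z * W) * Y * V by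
    intros; simp only [mul_assoc]]
  rw [hU, mul_one, show ∀ X Y V : Matrix n n ℂ, X * Y * Y * V = X * (Y * Y) * V by
    intros; simp only [mul_assoc]]
  congr 2
  rw [diagonal_mul_diagonal]
  congr 1
  funext i
  simp only [Function.comp_apply]
  rw [← Complex.ofReal_mul, Real.mul_self_sqrt (hM.eigenvalues_nonneg i)]
  rfl

/-- For Hermitian `A`, `B` and a density matrix `ρ`, the traces `Tr(ρA)` and `Tr(ρB)`
are real and `sqrt((Tr ρA)² + (Tr ρB)²) ≤ Tr(ρ (A² + B²)^(1/2))`, where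
`(A² + B²)^(1/2)` is the positive semidefinite square root. -/
theorem trace_sqrt_inequality (d : ℕ) (A B ρ : Matrix (Fin d) (Fin d) ℂ)
    (hA : A.IsHermitian) (hB : B.IsHermitian)
    (hρ : ρ.PosSemidef) (hρtr : ρ.trace = 1) :
    (ρ * A).trace.im = 0 ∧ (ρ * B).trace.im = 0 ∧
      Real.sqrt ((ρ * A).trace.re ^ 2 + (ρ * B).trace.re ^ 2)
        ≤ (ρ * (sq_add_sq_posSemidef hA hB).sqrt).trace.re := by
  have himA : (ρ * A).trace.im = 0 := trace_mul_im_zero' hρ.1 hA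
  have himB : (ρ * B).trace.im = 0 := trace_mul_im_zero' hρ.1 hB
  refine ⟨himA, himB, ?_⟩
  set S := (sq_add_sq_posSemidef hA hB).sqrt with hSdef
  have hS : S.PosSemidef := (sq_add_sq_posSemidef hA hB).posSemidef_sqrt
  have hSS : S * S = A * A + B * B := (sq_add_sq_posSemidef hA hB).sqrt_mul_self
  set a : ℝ := (ρ * A).trace.re with ha
  set b : ℝ := (ρ * B).trace.re with hb
  have hRHS : 0 ≤ (ρ * S).trace.re := (Complex.le_def.mp (psd_trace_mul_nonneg' hρ hS)).1
  rcases eq_or_lt_of_le (by positivity : (0:ℝ) ≤ a ^ 2 + b ^ 2) with h0 | hpos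
  · rw [← h0, Real.sqrt_zero]; exact hRHS
  set r : ℝ := Real.sqrt (a ^ 2 + b ^ 2) with hr
  have hrpos : 0 < r := Real.sqrt_pos.mpr hpos
  have hr2 : r ^ 2 = a ^ 2 + b ^ 2 := Real.sq_sqrt hpos.le
  set M : Matrix (Fin d) (Fin d) ℂ := (a : ℂ) • A + (b : ℂ) • B with hM
  set N : Matrix (Fin d) (Fin d) ℂ := (b : ℂ) • A - (a : ℂ) • B with hN
  have hMH : M.IsHermitian := by
    rw [Matrix.IsHermitian, hM, Matrix.conjTranspose_add, Matrix.conjTranspose_smul,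
      Matrix.conjTranspose_smul, hA.eq, hB.eq]
    simp [Complex.star_def, Complex.conj_ofReal]
  have hNH : N.IsHermitian := by
    rw [Matrix.IsHermitian, hN, Matrix.conjTranspose_sub, Matrix.conjTranspose_smul,
      Matrix.conjTranspose_smul, hA.eq, hB.eq]
    simp [Complex.star_def, Complex.conj_ofReal]
  have hS' : ((r : ℂ) • S).PosSemidef := by
    refine Matrix.PosSemidef.of_dotProduct_mulVec_nonneg ?_ ?_
    · rw [Matrix.IsHermitian, Matrix.conjTranspose_smul, hS.1.eq]
      simp [Complex.star_def, Complex.conj_ofReal]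
    · intro x
      rw [Matrix.smul_mulVec, dotProduct_smul, smul_eq_mul]
      exact mul_nonneg (by exact_mod_cast Complex.zero_le_real.mpr hrpos.le) (hS.dotProduct_mulVec_nonneg x)
  have hc : ((a : ℂ) ^ 2 + (b : ℂ) ^ 2) = (r : ℂ) ^ 2 := by
    rw [← Complex.ofReal_pow, ← Complex.ofReal_pow, ← Complex.ofReal_pow, ← Complex.ofReal_add,
      hr2]
  have expand : M * M + N * N = ((a : ℂ) ^ 2 + (b : ℂ) ^ 2) • (A * A + B * B) := by
    simp only [hM, hN, add_mul, mul_add, sub_mul, mul_sub, smul_mul_assoc, mul_smul_comm,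
      smul_smul, smul_add, add_smul]
    module
  have hrS : ((r : ℂ) • S) * ((r : ℂ) • S) = ((a : ℂ) ^ 2 + (b : ℂ) ^ 2) • (A * A + B * B) := by
    rw [smul_mul_assoc, mul_smul_comm, smul_smul, hSS, hc, ← sq]
  have hkey : ((r : ℂ) • S) * ((r : ℂ) • S) - M * M = N * N := by
    rw [hrS, sub_eq_iff_eq_add, ← expand]
    abel
  have hNN : (N * N).PosSemidef := by
    have := Matrix.posSemidef_conjTranspose_mul_self N
    rwa [hNH.eq] at this
  have hfin : (((r : ℂ) • S) - M).PosSemidef := psd_of_sq_le_sq' hMH hS' (hkey ▸ hNN)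
  have htr : 0 ≤ (ρ * (((r : ℂ) • S) - M)).trace.re :=
    (Complex.le_def.mp (psd_trace_mul_nonneg' hρ hfin)).1
  have htr2 : (ρ * (((r : ℂ) • S) - M)).trace =
      (r : ℂ) * (ρ * S).trace - ((a : ℂ) * (ρ * A).trace + (b : ℂ) * (ρ * B).trace) := by
    rw [mul_sub, hM, mul_add, Matrix.mul_smul, Matrix.mul_smul, Matrix.mul_smul,
      Matrix.trace_sub, Matrix.trace_add, Matrix.trace_smul, Matrix.trace_smul,
      Matrix.trace_smul]
    simp [smul_eq_mul]
  rw [htr2] at htr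
  simp only [Complex.sub_re, Complex.add_re, Complex.mul_re, Complex.ofReal_re,
    Complex.ofReal_im, himA, himB, ← ha, ← hb] at htr
  -- htr : 0 ≤ r * (ρ*S).trace.re - (a*a + b*b) roughly
  have hle : a ^ 2 + b ^ 2 ≤ r * (ρ * S).trace.re := by nlinarith [htr]
  have : r * r ≤ r * (ρ * S).trace.re := by nlinarith [hr2]
  calc r ≤ (ρ * S).trace.re := le_of_mul_le_mul_left (by linarith) hrpos
end
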